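/- arXiv:1608.03397 — 15 statements merged into one kernel-verified Lean document; each statement's English description precedes it below -/
import Mathlib

section
/- (Proposition 2, lower bound) Let Q1 : [0,1] → ℝ be nondecreasing with Q1(0) ≥ 0, let θ0 > 0 and c_H > 0, and set Q(x,1) = Q1(x) + Q1(1−x). Then for every x ∈ [0,1], the no-incentive equilibrium welfare satisfies θ0·Q(0,1) ≥ (1/2)·(θ0·Q(x,1) − x·c_H); i.e., the price of anarchy of the content routing game without incentive design is at least 1/2. -/
/-- Proposition 2, lower bound: For `Q1` nondecreasing on `[0,1]`
with `Q1(0) ≥ 0`, `θ0 > 0`, `c_H > 0` and `Q(x) = Q1(x) + Q1(1−x)`, the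
no-incentive equilibrium welfare satisfies
`θ0·Q(0) ≥ (1/2)·(θ0·Q(x) − x·c_H)` for every `x ∈ [0,1]`;
i.e. the price of anarchy without incentive design is at least `1/2`. -/
theorem stmt_3 (Q1 : ℝ → ℝ) (hmono : MonotoneOn Q1 (Set.Icc 0 1)) (h0 : 0 ≤ Q1 0)
    (θ0 cH : ℝ) (hθ : 0 < θ0) (hc : 0 < cH) :
    ∀ x ∈ Set.Icc (0 : ℝ) 1,
      (1 / 2) * (θ0 * (Q1 x + Q1 (1 - x)) - x * cH) ≤ θ0 * (Q1 0 + Q1 (1 - 0)) := by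
  intro x hx
  obtain ⟨hx0, hx1⟩ := hx
  have hxm : x ∈ Set.Icc (0:ℝ) 1 := ⟨hx0, hx1⟩
  have h1m : (1 - x) ∈ Set.Icc (0:ℝ) 1 := ⟨by linarith, by linarith⟩
  have hone : (1:ℝ) ∈ Set.Icc (0:ℝ) 1 := ⟨zero_le_one, le_refl 1⟩
  have h1 : Q1 x ≤ Q1 1 := hmono hxm hone hx1
  have h2 : Q1 (1 - x) ≤ Q1 1 := hmono h1m hone (by linarith)
  have hxc : 0 ≤ x * cH := mul_nonneg hx0 hc.le
  have hQ : θ0 * (Q1 x + Q1 (1 - x)) ≤ θ0 * (2 * Q1 1) :=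
    mul_le_mul_of_nonneg_left (by linarith) hθ.le
  have : θ0 * Q1 1 ≤ θ0 * (Q1 0 + Q1 (1 - 0)) := by
    have : Q1 1 ≤ Q1 0 + Q1 (1 - 0) := by norm_num; linarith
    exact mul_le_mul_of_nonneg_left this hθ.le
  nlinarith
end

section
/- (Proposition 2, tightness) Let q > 0, θ0 > 0, and define Q1(x) = 2qx for x ∈ [0,1/2] and Q1(x) = q for x ∈ [1/2,1], with Q(x,1) = Q1(x) + Q1(1−x). Then for every c_H ∈ (0, 2θ0 q): (i) sup over x ∈ [0,1] of SW(x) = θ0·Q(x,1) − x·c_H equals 2θ0 q − c_H/2, attained at x = 1/2; (ii) the no-incentive equilibrium welfare is SW(0) = θ0 q; and (iii) the infimum over c_H ∈ (0, 2θ0 q) of the ratio θ0 q / (2θ0 q − c_H/2) equals 1/2. Hence the price of anarchy without incentive design equals exactly 1/2. -/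
/-- Proposition 2, tightness: For `Q1(x) = 2qx` on `[0,1/2]` and
`Q1(x) = q` on `[1/2,1]`, with `Q(x) = Q1(x)+Q1(1−x)` and any
`c_H ∈ (0, 2θ0 q)`: (i) the supremum of `SW(x) = θ0·Q(x) − x·c_H` over `[0,1]`
is `2θ0 q − c_H/2`, attained at `x = 1/2`; (ii) the no-incentive equilibrium
welfare is `SW(0) = θ0 q`; (iii) the infimum over `c_H ∈ (0,2θ0 q)` of the
ratio `θ0 q / (2θ0 q − c_H/2)` is `1/2`. Hence the PoA equals exactly `1/2`. -/
theorem stmt_4 (q θ0 : ℝ) (hq : 0 < q) (hθ : 0 < θ0) :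
    let Q1 : ℝ → ℝ := fun x => if x ≤ 1 / 2 then 2 * q * x else q
    let Q : ℝ → ℝ := fun x => Q1 x + Q1 (1 - x)
    (∀ cH ∈ Set.Ioo (0 : ℝ) (2 * θ0 * q),
      (∀ x ∈ Set.Icc (0 : ℝ) 1, θ0 * Q x - x * cH ≤ 2 * θ0 * q - cH / 2) ∧
      θ0 * Q (1 / 2) - (1 / 2) * cH = 2 * θ0 * q - cH / 2 ∧
      θ0 * Q 0 - 0 * cH = θ0 * q) ∧
    IsGLB {w : ℝ | ∃ cH ∈ Set.Ioo (0 : ℝ) (2 * θ0 * q),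
        w = θ0 * q / (2 * θ0 * q - cH / 2)} (1 / 2) := by
  intro Q1 Q
  have hQ1 : ∀ x : ℝ, Q1 x = if x ≤ 1 / 2 then 2 * q * x else q := fun _ => rfl
  constructor
  · intro cH hcH
    obtain ⟨hc0, hc2⟩ := hcH
    refine ⟨?_, ?_, ?_⟩
    · intro x hx
      obtain ⟨hx0, hx1⟩ := hx
      simp only [Q, hQ1]
      rcases le_or_gt x (1 / 2) with h | h
      · rw [if_pos h]
        rcases le_or_gt (1 - x) (1 / 2) with h' | h'
        · rw [if_pos h']
          nlinarith
        · rw [if_neg (not_le.mpr h')]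
          nlinarith
      · rw [if_neg (not_le.mpr h), if_pos (by linarith)]
        nlinarith
    · simp only [Q, hQ1]
      norm_num
      ring
    · simp only [Q, hQ1]
      norm_num
  · constructor
    · rintro w ⟨cH, ⟨hc0, hc2⟩, rfl⟩
      rw [div_le_div_iff₀ (by norm_num) (by nlinarith)]
      nlinarith
    · intro b hb
      by_contra hb2
      push_neg at hb2
      have hb0 : (0:ℝ) < b := lt_trans (by norm_num) hb2
      set ε : ℝ := 2 * θ0 * q * (2 - 1 / b) with hε
      have hεpos : 0 < ε := by
        have : 1 / b < 2 := by
          rw [div_lt_iff₀ hb0]; linarith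
        have h2 : 0 < 2 * θ0 * q := by positivity
        nlinarith
      set c : ℝ := min ε (2 * θ0 * q) / 2 with hc
      have hcpos : 0 < c := by positivity
      have hclt : c < 2 * θ0 * q := by
        have : min ε (2 * θ0 * q) ≤ 2 * θ0 * q := min_le_right _ _
        have h2 : 0 < 2 * θ0 * q := by positivity
        simp only [hc]; linarith
      have hcε : c < ε := by
        have : min ε (2 * θ0 * q) ≤ ε := min_le_left _ _
        simp only [hc]; linarith
      have hmem : θ0 * q / (2 * θ0 * q - c / 2) ∈
          {w : ℝ | ∃ cH ∈ Set.Ioo (0 : ℝ) (2 * θ0 * q),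
            w = θ0 * q / (2 * θ0 * q - cH / 2)} := ⟨c, ⟨hcpos, hclt⟩, rfl⟩
      have hle := hb hmem
      have hden : 0 < 2 * θ0 * q - c / 2 := by nlinarith
      rw [le_div_iff₀ hden] at hle
      -- hle : b * (2θ0q - c/2) ≤ θ0 q ; hcε : c < 2θ0q(2 - 1/b)
      have : b * (c / 2) < b * (θ0 * q * (2 - 1 / b)) := by
        apply mul_lt_mul_of_pos_left _ hb0
        nlinarith
      have hb1 : b * (1 / b) = 1 := by field_simp
      nlinarith [mul_pos hθ hq]
end

section
/- (Proposition 3) Let b ∈ (0,1], c_H > 0, and let x̂ ∈ (0,b) be a target flow. Define the side-payment function g(x) = x̂·c_H·(b−x) / (b·(b−x̂)) for x ∈ [0,b], and let payoffs be u(L,x) = θ·Q(x,b) − g(x) and u(H,x) = θ·Q(x,b) − c_H + ((b−x)/x)·g(x) for x ∈ (0,b], where θ ∈ ℝ and Q(·,b) : [0,b] → ℝ is any function. Then: (i) u(L,x̂) = u(H,x̂) = θ·Q(x̂,b) − (x̂/b)·c_H, so x̂ is an equilibrium at which every user's total perceived cost is x̂·c_H/b regardless of path; (ii) for every x ∈ (0,x̂),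 u(H,x) > u(L,x); and (iii) for every x ∈ (x̂,b), u(L,x) > u(H,x). -/
/-- Proposition 3: With participation mass `b ∈ (0,1]`, target
flow `x̂ ∈ (0,b)` and side-payment `g(x) = x̂·c_H·(b−x)/(b·(b−x̂))`, the payoffs
`u(L,x) = θ·Q(x) − g(x)` and `u(H,x) = θ·Q(x) − c_H + ((b−x)/x)·g(x)` satisfy:
(i) `u(L,x̂) = u(H,x̂) = θ·Q(x̂) − (x̂/b)·c_H`; (ii) `u(H,x) > u(L,x)` for
`x ∈ (0,x̂)`; (iii) `u(L,x) > u(H,x)` for `x ∈ (x̂,b)`. -/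
theorem stmt_5 (b cH xh θ : ℝ) (hb : b ∈ Set.Ioc (0 : ℝ) 1) (hc : 0 < cH)
    (hx : xh ∈ Set.Ioo 0 b) (Q : ℝ → ℝ) :
    let g : ℝ → ℝ := fun x => xh * cH * (b - x) / (b * (b - xh))
    let uL : ℝ → ℝ := fun x => θ * Q x - g x
    let uH : ℝ → ℝ := fun x => θ * Q x - cH + ((b - x) / x) * g x
    (uL xh = θ * Q xh - (xh / b) * cH ∧ uH xh = θ * Q xh - (xh / b) * cH) ∧
    (∀ x ∈ Set.Ioo 0 xh, uL x < uH x) ∧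
    (∀ x ∈ Set.Ioo xh b, uH x < uL x) := by
  obtain ⟨hb0, hb1⟩ := hb
  obtain ⟨hx0, hxb⟩ := hx
  have hbx : (0:ℝ) < b - xh := by linarith
  intro g uL uH
  refine ⟨⟨?_, ?_⟩, ?_, ?_⟩
  · simp only [uL, g]
    field_simp
  · simp only [uH, g]
    field_simp
    ring
  · intro x hxm
    obtain ⟨h1, h2⟩ := hxm
    simp only [uL, uH, g]
    have key : cH < (b - x) / x * (xh * cH * (b - x) / (b * (b - xh)))
        + xh * cH * (b - x) / (b * (b - xh)) := by
      rw [div_mul_div_comm, div_add_div _ _ (by positivity) (by positivity),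
        lt_div_iff₀ (by positivity)]
      nlinarith [mul_pos (mul_pos (mul_pos (mul_pos (sub_pos.mpr h2) hc) hb0) hb0)
        (mul_pos hb0 hbx)]
    linarith
  · intro x hxm
    obtain ⟨h1, h2⟩ := hxm
    simp only [uL, uH, g]
    have hx0' : (0:ℝ) < x := lt_trans hx0 h1
    have key : (b - x) / x * (xh * cH * (b - x) / (b * (b - xh)))
        + xh * cH * (b - x) / (b * (b - xh)) < cH := by
      rw [div_mul_div_comm, div_add_div _ _ (by positivity) (by positivity),
        div_lt_iff₀ (by positivity)]
      nlinarith [mul_pos (mul_pos (mul_pos (mul_pos (sub_pos.mpr h1) hc) hb0) hb0)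
        (mul_pos hb0 hbx)]
    linarith
end

section
/- (Proposition 4) Suppose all users have the same valuation θ0 > 0, let c_H > 0, let Q1 : [0,1] → ℝ be continuous with Q(x,1) = Q1(x)+Q1(1−x), and let x* ∈ [0,1] maximize SW(x) = θ0·Q(x,1) − x·c_H over [0,1], with SW(x*) ≥ 0. Then under the side-payment mechanism g(x) = x*·c_H·(1−x)/(1−x*) (taking b = 1 and target x̂ = x*), x* is an equilibrium at which every user's payoff equals θ0·Q(x*,1) − x*·c_H = SW(x*) ≥ 0 (so individual rationality holds), and the equilibrium social welfare equals the social optimum max over x ∈ [0,1] of SW(x); i.e., for homogeneous users the side-payment mechanism achieves price of anarchy PoA_g = 1. -/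
/-- Proposition 4: For homogeneous users of valuation `θ0 > 0`,
with `Q(x) = Q1(x)+Q1(1−x)` (`Q1` continuous), a maximizer `x*` of
`SW(x) = θ0·Q(x) − x·c_H` over `[0,1]` with `SW(x*) ≥ 0`, the side-payment
mechanism `g(x) = x*·c_H·(1−x)/(1−x*)` makes `x*` an equilibrium at which every
user's payoff equals `SW(x*) ≥ 0` (individual rationality), and the equilibrium
welfare is the social optimum; i.e. `PoA_g = 1`. -/
theorem stmt_6 (θ0 cH : ℝ) (hθ : 0 < θ0) (hc : 0 < cH) (Q1 : ℝ → ℝ)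
    (hcont : ContinuousOn Q1 (Set.Icc 0 1)) (xs : ℝ) (hxs : xs ∈ Set.Icc (0 : ℝ) 1)
    (hmax : ∀ x ∈ Set.Icc (0 : ℝ) 1,
      θ0 * (Q1 x + Q1 (1 - x)) - x * cH ≤ θ0 * (Q1 xs + Q1 (1 - xs)) - xs * cH)
    (hIR : 0 ≤ θ0 * (Q1 xs + Q1 (1 - xs)) - xs * cH) :
    let Q : ℝ → ℝ := fun x => Q1 x + Q1 (1 - x)
    let SW : ℝ → ℝ := fun x => θ0 * Q x - x * cH
    let g : ℝ → ℝ := fun x => xs * cH * (1 - x) / (1 - xs)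
    let uL : ℝ → ℝ := fun x => θ0 * Q x - g x
    let uH : ℝ → ℝ := fun x => θ0 * Q x - cH + ((1 - x) / x) * g x
    ((0 < xs → uL xs ≤ uH xs) ∧ (xs < 1 → uH xs ≤ uL xs)) ∧
    uL xs = SW xs ∧ (0 < xs → uH xs = SW xs) ∧ 0 ≤ SW xs ∧
    IsGreatest (SW '' Set.Icc 0 1) (SW xs) := by
  intro Q SW g uL uH
  -- xs < 1, since SW(1) = SW(0) - cH < SW(0)
  have hxs1 : xs < 1 := by
    rcases lt_or_eq_of_le hxs.2 with h | h
    · exact h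
    · exfalso
      have h0 := hmax 0 (by constructor <;> norm_num)
      rw [← h] at h0
      simp at h0
      nlinarith
  have hne : (1 : ℝ) - xs ≠ 0 := by linarith
  have hg : g xs = xs * cH := by
    simp only [g]
    field_simp
  have hL : uL xs = SW xs := by
    simp only [uL, SW, hg]
  refine ⟨⟨?_, ?_⟩, hL, ?_, hIR, ?_⟩
  · intro hpos
    have : uH xs = SW xs := by
      simp only [uH, SW, g]
      field_simp
      ring
    rw [hL, this]
  · intro _
    have hx0 : 0 ≤ xs := hxs.1
    rcases eq_or_lt_of_le hx0 with h | hpos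
    · simp only [uH, uL, g, ← h]
      norm_num
      nlinarith [hmax 0 (by constructor <;> norm_num)]
    · have : uH xs = SW xs := by
        simp only [uH, SW, g]
        field_simp
        ring
      rw [hL, this]
  · intro hpos
    simp only [uH, SW, g]
    field_simp
    ring
  · constructor
    · exact ⟨xs, hxs, rfl⟩
    · rintro y ⟨x, hx, rfl⟩
      exact hmax x hx
end

section
/- (Claim in the proof of Theorem 1) Let Q1 : [0,1] → ℝ be nondecreasing with Q1(0) ≥ 0, and suppose Q(x) = Q1(x) + Q1(1−x) is such that SW(x) = θ0·Q(x) − x·c_H is concave on [0,1], where 0 < θ1 ≤ θ2, θ0 = (θ1+θ2)/2, and c_H > 0. Let x* ∈ [0,1/2] be a maximizer of SW over [0,1], and suppose 0 ≤ x̃ < x_IR ≤ x*. Then the half-participation welfare at x̃ is at most the full-participation welfare at x_IR: (1/2)·θ2·(Q1(x̃) + Q1(1/2 − x̃)) − x̃·c_H ≤ θ0·Q(x_IR) − x_IR·c_H. -/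
/-- Claim in the proof of Theorem 1: With `Q1` nondecreasing on
`[0,1]`, `Q1(0) ≥ 0`, concave social welfare `SW(x) = θ0·(Q1(x)+Q1(1−x)) − x·c_H`
where `θ0 = (θ1+θ2)/2`, `0 < θ1 ≤ θ2`, `c_H > 0`, a maximizer `x* ∈ [0,1/2]`
of `SW` over `[0,1]`, and `0 ≤ x̃ < x_IR ≤ x*`, the half-participation welfare
at `x̃` is at most the full-participation welfare at `x_IR`. -/
theorem stmt_7 (Q1 : ℝ → ℝ) (hmono : MonotoneOn Q1 (Set.Icc 0 1)) (h0 : 0 ≤ Q1 0)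
    (θ1 θ2 cH : ℝ) (hθ1 : 0 < θ1) (h12 : θ1 ≤ θ2) (hc : 0 < cH)
    (hconc : ConcaveOn ℝ (Set.Icc 0 1)
      (fun x => ((θ1 + θ2) / 2) * (Q1 x + Q1 (1 - x)) - x * cH))
    (xs xIR xt : ℝ) (hxs : xs ∈ Set.Icc (0 : ℝ) (1 / 2))
    (hmax : ∀ x ∈ Set.Icc (0 : ℝ) 1,
      ((θ1 + θ2) / 2) * (Q1 x + Q1 (1 - x)) - x * cH ≤
        ((θ1 + θ2) / 2) * (Q1 xs + Q1 (1 - xs)) - xs * cH)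
    (hxt : 0 ≤ xt) (h1 : xt < xIR) (h2 : xIR ≤ xs) :
    (1 / 2) * θ2 * (Q1 xt + Q1 (1 / 2 - xt)) - xt * cH ≤
      ((θ1 + θ2) / 2) * (Q1 xIR + Q1 (1 - xIR)) - xIR * cH := by

  have hxsh : xs ≤ 1/2 := hxs.2
  have hxs0 : 0 ≤ xs := hxs.1
  have hxth : xt ≤ 1/2 := le_of_lt (lt_of_lt_of_le h1 (le_trans h2 hxsh))
  have hxt1 : xt ∈ Set.Icc (0:ℝ) 1 := ⟨hxt, by linarith⟩
  have hxs1 : xs ∈ Set.Icc (0:ℝ) 1 := ⟨hxs0, by linarith⟩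
  have hxIR0 : 0 ≤ xIR := le_of_lt (lt_of_le_of_lt hxt h1)
  have hmem : ∀ y, 0 ≤ y → y ≤ 1 → (y : ℝ) ∈ Set.Icc (0:ℝ) 1 := fun y h h' => ⟨h, h'⟩
  -- nonnegativity and monotonicity facts
  have hQxt : 0 ≤ Q1 xt := le_trans h0 (hmono (hmem 0 le_rfl zero_le_one) hxt1 hxt)
  have hmemh : (1/2 - xt) ∈ Set.Icc (0:ℝ) 1 := ⟨by linarith, by linarith⟩
  have hmem1 : (1 - xt) ∈ Set.Icc (0:ℝ) 1 := ⟨by linarith, by linarith⟩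
  have hQh : 0 ≤ Q1 (1/2 - xt) :=
    le_trans h0 (hmono (hmem 0 le_rfl zero_le_one) hmemh (by linarith))
  have hQhi : Q1 (1/2 - xt) ≤ Q1 (1 - xt) := hmono hmemh hmem1 (by linarith)
  -- step 1: half welfare at xt ≤ full welfare (SW) at xt
  have step1 : (1/2) * θ2 * (Q1 xt + Q1 (1/2 - xt)) ≤
      ((θ1 + θ2) / 2) * (Q1 xt + Q1 (1 - xt)) := by
    have hcoef : (1/2) * θ2 ≤ (θ1 + θ2) / 2 := by linarith
    have hcoef0 : 0 ≤ (1/2) * θ2 := by linarith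
    have hsum : Q1 xt + Q1 (1/2 - xt) ≤ Q1 xt + Q1 (1 - xt) := by linarith
    have hsum0 : 0 ≤ Q1 xt + Q1 (1/2 - xt) := by linarith
    exact mul_le_mul hcoef hsum hsum0 (by linarith)
  -- step 2: SW xt ≤ SW xIR by concavity and optimality of xs
  set f : ℝ → ℝ := fun x => ((θ1 + θ2) / 2) * (Q1 x + Q1 (1 - x)) - x * cH with hf
  have hst : 0 < xs - xt := by linarith
  have ha0 : 0 ≤ (xs - xIR) / (xs - xt) := div_nonneg (by linarith) (le_of_lt hst)
  have hb0 : 0 ≤ (xIR - xt) / (xs - xt) := div_nonneg (by linarith) (le_of_lt hst)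
  have hab : (xs - xIR) / (xs - xt) + (xIR - xt) / (xs - xt) = 1 := by
    field_simp
    ring
  have hcomb : (xs - xIR) / (xs - xt) * xt + (xIR - xt) / (xs - xt) * xs = xIR := by
    have hne : xs - xt ≠ 0 := ne_of_gt hst
    rw [div_mul_eq_mul_div, div_mul_eq_mul_div, ← add_div, div_eq_iff hne]
    ring
  have hcc := hconc.2 hxt1 hxs1 ha0 hb0 hab
  simp only [smul_eq_mul, hcomb] at hcc
  have hfs : f xt ≤ f xs := hmax xt hxt1
  have hbmul : (xIR - xt) / (xs - xt) * f xt ≤ (xIR - xt) / (xs - xt) * f xs :=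
    mul_le_mul_of_nonneg_left hfs hb0
  have step2 : f xt ≤ f xIR := by
    have heq : f xt = (xs - xIR) / (xs - xt) * f xt + (xIR - xt) / (xs - xt) * f xt := by
      have : ((xs - xIR) / (xs - xt) + (xIR - xt) / (xs - xt)) * f xt = 1 * f xt := by
        rw [hab]
      linarith [this]
    calc f xt = (xs - xIR) / (xs - xt) * f xt + (xIR - xt) / (xs - xt) * f xt := heq
      _ ≤ (xs - xIR) / (xs - xt) * f xt + (xIR - xt) / (xs - xt) * f xs :=
          add_le_add_right hbmul _
      _ ≤ f xIR := hcc
  have : f xt = ((θ1 + θ2) / 2) * (Q1 xt + Q1 (1 - xt)) - xt * cH := rfl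
  have h4 : ((θ1 + θ2) / 2) * (Q1 xt + Q1 (1 - xt)) - xt * cH ≤
      ((θ1 + θ2) / 2) * (Q1 xIR + Q1 (1 - xIR)) - xIR * cH := step2
  linarith
end

section
/- (Theorem 1, PoA lower bound) Let Q1 : [0,1] → ℝ be nondecreasing with Q1(0) ≥ 0, and suppose SW(x) = θ0·(Q1(x)+Q1(1−x)) − x·c_H is concave on [0,1], where θ0 > 0 and c_H > 0. Let x* be a maximizer of SW over [0,1], and let m ∈ [0, x*] be arbitrary (in particular m = min(x*, x_IR) for any point x_IR ≥ 0 where the type-1 individual-rationality constraint holds). Then SW(m) ≥ (1/2)·SW(x) for every x ∈ [0,1]. Consequently the optimal side-payment mechanism's welfare SW_g satisfies SW_g ≥ (1/2)·SW(x*), i.e., PoA_g ≥ 1/2. -/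
/-- Theorem 1, PoA lower bound: With `Q1` nondecreasing on
`[0,1]`, `Q1(0) ≥ 0`, `θ0 > 0`, `c_H > 0` and concave
`SW(x) = θ0·(Q1(x)+Q1(1−x)) − x·c_H` on `[0,1]`, if `x*` maximizes `SW` over
`[0,1]` and `m ∈ [0,x*]`, then `SW(m) ≥ (1/2)·SW(x)` for every `x ∈ [0,1]`;
in particular the optimal side-payment welfare satisfies `PoA_g ≥ 1/2`. -/
theorem stmt_8 (Q1 : ℝ → ℝ) (hmono : MonotoneOn Q1 (Set.Icc 0 1)) (h0 : 0 ≤ Q1 0)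
    (θ0 cH : ℝ) (hθ : 0 < θ0) (hc : 0 < cH)
    (hconc : ConcaveOn ℝ (Set.Icc 0 1)
      (fun x => θ0 * (Q1 x + Q1 (1 - x)) - x * cH))
    (xs : ℝ) (hxs : xs ∈ Set.Icc (0 : ℝ) 1)
    (hmax : ∀ x ∈ Set.Icc (0 : ℝ) 1,
      θ0 * (Q1 x + Q1 (1 - x)) - x * cH ≤ θ0 * (Q1 xs + Q1 (1 - xs)) - xs * cH)
    (m : ℝ) (hm : m ∈ Set.Icc 0 xs) :
    ∀ x ∈ Set.Icc (0 : ℝ) 1,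
      (1 / 2) * (θ0 * (Q1 x + Q1 (1 - x)) - x * cH) ≤
        θ0 * (Q1 m + Q1 (1 - m)) - m * cH := by
  intro x hx
  set f : ℝ → ℝ := fun x => θ0 * (Q1 x + Q1 (1 - x)) - x * cH with hf
  clear_value f
  obtain ⟨hx0, hx1⟩ := hx
  obtain ⟨hxs0, hxs1⟩ := hxs
  obtain ⟨hm0, hmxs⟩ := hm
  have h01 : (0 : ℝ) ∈ Set.Icc (0 : ℝ) 1 := by constructor <;> norm_num
  have hmem : m ∈ Set.Icc (0 : ℝ) 1 := ⟨hm0, hmxs.trans hxs1⟩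
  -- bounds on Q1
  have hQx1 : Q1 x ≤ Q1 1 := hmono ⟨hx0, hx1⟩ (by constructor <;> norm_num) hx1
  have hQx1' : Q1 (1 - x) ≤ Q1 1 :=
    hmono (by constructor <;> linarith) (by constructor <;> norm_num) (by linarith)
  have hQ1 : 0 ≤ Q1 1 := h0.trans (hmono h01 (by constructor <;> norm_num) (by norm_num))
  -- f 0 ≥ 0
  have hf0 : 0 ≤ f 0 := by
    simp only [hf]
    have : (0:ℝ) ≤ θ0 * (Q1 0 + Q1 (1 - 0)) := by
      apply mul_nonneg hθ.le
      simp only [sub_zero]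
      linarith
    simpa using this
  -- f x ≤ 2 * f 0
  have hfx : f x ≤ 2 * f 0 := by
    simp only [hf]
    have h1 : θ0 * (Q1 x + Q1 (1 - x)) ≤ θ0 * (Q1 1 + Q1 1) := by
      apply mul_le_mul_of_nonneg_left _ hθ.le
      linarith
    have h2 : θ0 * (Q1 1 + Q1 1) ≤ 2 * (θ0 * (Q1 0 + Q1 (1 - 0))) := by
      simp only [sub_zero]
      nlinarith [mul_nonneg hθ.le h0]
    have hxc : 0 ≤ x * cH := mul_nonneg hx0 hc.le
    simp only [sub_zero] at *
    nlinarith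
  -- f xs ≥ f 0 ≥ 0
  have hfxs : f 0 ≤ f xs := by rw [hf]; simpa using hmax 0 h01
  -- concavity: min (f 0) (f xs) ≤ f m
  have hseg : m ∈ segment ℝ (0:ℝ) xs := by
    rw [segment_eq_Icc hxs0]
    exact ⟨hm0, hmxs⟩
  have hmin : min (f 0) (f xs) ≤ f m :=
    hconc.ge_on_segment h01 ⟨hxs0, hxs1⟩ hseg
  have hfm : f 0 ≤ f m := by
    rw [min_eq_left hfxs] at hmin
    exact hmin
  have hfxx : f x ≤ f xs := by rw [hf]; exact hmax x ⟨hx0, hx1⟩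
  have h2fm : (1/2) * f x ≤ f m := by
    rcases le_or_gt (f x) 0 with h | h
    · have : (1/2) * f x ≤ 0 := by linarith
      linarith
    · linarith
  rw [hf] at h2fm; exact h2fm
end

section
/- (Theorem 1, tightness) Let q > 0, θ0 > 0, let Q1(x) = 2qx on [0,1/2] and Q1(x) = q on [1/2,1], and fix c_H ∈ (0, 2θ0 q). For θ1 ∈ (0, c_H/(2q)) with θ2 = 2θ0 − θ1: (i) the social optimum is sup over x ∈ [0,1] of θ0·(Q1(x)+Q1(1−x)) − x·c_H = 2θ0 q − c_H/2; (ii) the type-1 IR boundary, i.e., the unique x ≥ 0 with θ1·(q + 2qx) = x·c_H, is x_IR = θ1 q/(c_H − 2θ1 q), and x_IR → 0 as θ1 → 0⁺, so SW(x_IR) → θ0 q; (iii) the half-participation optimum sup over x ∈ [0,1/2] of (1/2)·θ2·(Q1(x)+Q1(1/2−x)) − x·c_H equals (1/2)·θ2·q, which tends to θ0 q as θ1 → 0⁺; (iv) the infimum over c_H ∈ (0, 2θ0 q) of θ0 q/(2θ0 q − c_H/2) equals 1/2. Hence the side-payment mechanism with two user types has price of anarchy PoA_g = 1/2. -/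
/-- Theorem 1, tightness: For `Q1(x) = 2qx` on `[0,1/2]`,
`Q1(x) = q` on `[1/2,1]`, `c_H ∈ (0,2θ0 q)` and `θ1 ∈ (0, c_H/(2q))` with
`θ2 = 2θ0 − θ1`: (i) the social optimum is `2θ0 q − c_H/2`, attained at `1/2`;
(ii) the type-1 IR boundary is `x_IR = θ1 q/(c_H − 2θ1 q)` (the unique
nonnegative solution of `θ1(q+2qx) = x·c_H`), and `x_IR → 0`,
`SW(x_IR) → θ0 q` as `θ1 → 0⁺`; (iii) the half-participation optimum is
`(1/2)θ2 q`, attained at `x = 0`, tending to `θ0 q` as `θ1 → 0⁺`; (iv) the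
infimum over `c_H` of `θ0 q/(2θ0 q − c_H/2)` is `1/2`. Hence `PoA_g = 1/2`. -/
theorem stmt_9 (q θ0 : ℝ) (hq : 0 < q) (hθ : 0 < θ0) :
    let Q1 : ℝ → ℝ := fun x => if x ≤ 1 / 2 then 2 * q * x else q
    let Q : ℝ → ℝ := fun x => Q1 x + Q1 (1 - x)
    (∀ cH ∈ Set.Ioo (0 : ℝ) (2 * θ0 * q),
      ((∀ x ∈ Set.Icc (0 : ℝ) 1, θ0 * Q x - x * cH ≤ 2 * θ0 * q - cH / 2) ∧
        θ0 * Q (1 / 2) - (1 / 2) * cH = 2 * θ0 * q - cH / 2) ∧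
      (∀ θ1 ∈ Set.Ioo (0 : ℝ) (cH / (2 * q)),
        (θ1 * (q + 2 * q * (θ1 * q / (cH - 2 * θ1 * q))) =
            (θ1 * q / (cH - 2 * θ1 * q)) * cH ∧
          (∀ x : ℝ, 0 ≤ x → θ1 * (q + 2 * q * x) = x * cH →
            x = θ1 * q / (cH - 2 * θ1 * q))) ∧
        (∀ x ∈ Set.Icc (0 : ℝ) (1 / 2),
          (1 / 2) * (2 * θ0 - θ1) * (Q1 x + Q1 (1 / 2 - x)) - x * cH ≤
            (1 / 2) * (2 * θ0 - θ1) * q) ∧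
        (1 / 2) * (2 * θ0 - θ1) * (Q1 0 + Q1 (1 / 2 - 0)) - 0 * cH =
          (1 / 2) * (2 * θ0 - θ1) * q) ∧
      Filter.Tendsto (fun θ1 : ℝ => θ1 * q / (cH - 2 * θ1 * q))
        (nhdsWithin 0 (Set.Ioi 0)) (nhds 0) ∧
      Filter.Tendsto (fun θ1 : ℝ =>
          θ0 * Q (θ1 * q / (cH - 2 * θ1 * q)) - (θ1 * q / (cH - 2 * θ1 * q)) * cH)
        (nhdsWithin 0 (Set.Ioi 0)) (nhds (θ0 * q)) ∧
      Filter.Tendsto (fun θ1 : ℝ => (1 / 2) * (2 * θ0 - θ1) * q)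
        (nhdsWithin 0 (Set.Ioi 0)) (nhds (θ0 * q))) ∧
    IsGLB {w : ℝ | ∃ cH ∈ Set.Ioo (0 : ℝ) (2 * θ0 * q),
        w = θ0 * q / (2 * θ0 * q - cH / 2)} (1 / 2) := by
  intro Q1 Q
  constructor
  · intro cH hcH
    obtain ⟨hc0, hc2⟩ := hcH
    refine ⟨⟨?_, ?_⟩, ?_, ?_, ?_, ?_⟩
    · intro x hx
      obtain ⟨hx0, hx1⟩ := hx
      simp only [Q, Q1]
      by_cases h : x ≤ 1 / 2
      · have h' : ¬ (1 - x ≤ 1 / 2) ∨ x = 1/2 := by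
          rcases lt_or_eq_of_le h with h1 | h1
          · left; linarith
          · right; exact h1
        rcases h' with h' | h'
        · rw [if_pos h, if_neg h']; nlinarith
        · subst h'; norm_num; nlinarith
      · push_neg at h
        rw [if_neg (by linarith), if_pos (by linarith)]
        nlinarith
    · simp only [Q, Q1]; norm_num; ring
    · intro θ1 hθ1
      obtain ⟨ht0, ht2⟩ := hθ1
      have hd : 0 < cH - 2 * θ1 * q := by
        rw [lt_div_iff₀ (by positivity)] at ht2; nlinarith
      refine ⟨⟨?_, ?_⟩, ?_, ?_⟩
      · have hx : θ1 * q / (cH - 2 * θ1 * q) * (cH - 2 * θ1 * q) = θ1 * q := div_mul_cancel₀ _ hd.ne'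
        linear_combination (-1:ℝ) * hx
      · intro x _ hx
        have : x * (cH - 2 * θ1 * q) = θ1 * q := by nlinarith
        rw [eq_div_iff hd.ne']
        nlinarith
      · intro x hx
        obtain ⟨hx0, hx1⟩ := hx
        simp only [Q1]
        rw [if_pos hx1, if_pos (by linarith)]
        nlinarith
      · simp only [Q1]; norm_num; left; ring
    · have hc : ContinuousAt (fun θ1 : ℝ => θ1 * q / (cH - 2 * θ1 * q)) 0 := by
        apply ContinuousAt.div
        · fun_prop
        · fun_prop
        · norm_num; exact ne_of_gt hc0
      have hT0 : Filter.Tendsto (fun θ1 : ℝ => θ1 * q / (cH - 2 * θ1 * q))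
          (nhds 0) (nhds 0) := by simpa using hc.tendsto
      exact hT0.mono_left nhdsWithin_le_nhds
    · have hT : Filter.Tendsto (fun θ1 : ℝ => θ1 * q / (cH - 2 * θ1 * q))
          (nhdsWithin 0 (Set.Ioi 0)) (nhds 0) := by
        have hc : ContinuousAt (fun θ1 : ℝ => θ1 * q / (cH - 2 * θ1 * q)) 0 := by
          apply ContinuousAt.div
          · fun_prop
          · fun_prop
          · norm_num; exact ne_of_gt hc0
        have hT0 : Filter.Tendsto (fun θ1 : ℝ => θ1 * q / (cH - 2 * θ1 * q))
            (nhds 0) (nhds 0) := by simpa using hc.tendsto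
        exact hT0.mono_left nhdsWithin_le_nhds
      have hev : (fun θ1 : ℝ =>
            θ0 * Q (θ1 * q / (cH - 2 * θ1 * q)) - (θ1 * q / (cH - 2 * θ1 * q)) * cH)
          =ᶠ[nhdsWithin (0:ℝ) (Set.Ioi 0)] (fun θ1 : ℝ =>
            θ0 * (2 * q * (θ1 * q / (cH - 2 * θ1 * q)) + q)
            - (θ1 * q / (cH - 2 * θ1 * q)) * cH) := by
        filter_upwards [hT (Ioo_mem_nhds (by norm_num : (-(1:ℝ)/2) < 0)
          (by norm_num : (0:ℝ) < 1/2))] with θ1 hmem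
        simp only [Set.mem_preimage, Set.mem_Ioo] at hmem
        obtain ⟨hm1, hm2⟩ := hmem
        simp only [Q, Q1]
        rw [if_pos (by linarith), if_neg (by push_neg; linarith)]
      refine Filter.Tendsto.congr' hev.symm ?_
      have : Filter.Tendsto (fun y : ℝ => θ0 * (2 * q * y + q) - y * cH)
          (nhds 0) (nhds (θ0 * q)) := by
        have : ContinuousAt (fun y : ℝ => θ0 * (2 * q * y + q) - y * cH) 0 := by fun_prop
        simpa using this.tendsto
      exact this.comp hT
    · have : Filter.Tendsto (fun θ1 : ℝ => (1 / 2) * (2 * θ0 - θ1) * q)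
          (nhds 0) (nhds (θ0 * q)) := by
        have : ContinuousAt (fun θ1 : ℝ => (1 / 2) * (2 * θ0 - θ1) * q) 0 := by fun_prop
        have h2 := this.tendsto
        norm_num at h2 ⊢
        convert h2 using 2
        ring
      exact this.mono_left nhdsWithin_le_nhds
  · constructor
    · rintro w ⟨cH, ⟨hc0, hc2⟩, rfl⟩
      rw [le_div_iff₀ (by linarith)]
      linarith
    · intro b hb
      by_contra hb2
      push_neg at hb2
      set cH := θ0 * q * (2 * b - 1) / b with hcH
      have hbpos : 0 < b := by linarith
      have hcpos : 0 < cH := by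
        have h1 : (0:ℝ) < θ0 * q * (2 * b - 1) :=
          mul_pos (mul_pos hθ hq) (by linarith)
        exact div_pos h1 hbpos
      have hclt : cH < 2 * θ0 * q := by
        rw [hcH, div_lt_iff₀ hbpos]; nlinarith [mul_pos hθ hq]
      have hmem : θ0 * q / (2 * θ0 * q - cH / 2) ∈
          {w : ℝ | ∃ cH ∈ Set.Ioo (0 : ℝ) (2 * θ0 * q),
            w = θ0 * q / (2 * θ0 * q - cH / 2)} := ⟨cH, ⟨hcpos, hclt⟩, rfl⟩
      have hle := hb hmem
      have hcb : cH * b = θ0 * q * (2 * b - 1) := by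
        rw [hcH]; field_simp
      have hden : 0 < 2 * θ0 * q - cH / 2 := by linarith
      have key : θ0 * q / (2 * θ0 * q - cH / 2) < b := by
        rw [div_lt_iff₀ hden]
        nlinarith [mul_pos (mul_pos hθ hq) (show (0:ℝ) < b - 1/2 by linarith)]
      linarith
end

section
/- (Theorem 2, equilibrium structure) Let θ0 > 0, c_H > 0, a ∈ [0,1), let Q1 : [0,1] → ℝ be continuous, nondecreasing and concave with Q1(0) ≥ 0, and set Q(x) = Q1(x)+Q1(1−x), Q̲ = Q(0), Q̄ = Q(1/2). Under content restriction with coefficient a, payoffs are u_a(L,x) = a·θ0·Q(x) and u_a(H,x) = θ0·Q(x) − c_H. Then: (i) any equilibrium x̂ ∈ (0,1) satisfies (1−a)·θ0·Q(x̂) = c_H; (ii) if (1−a)·θ0·Q̲ > c_H, then u_a(H,x) > u_a(L,x) for every x ∈ [0,1], so x̂ = 1 is the unique equilibrium; (iii) if (1−a)·θ0·Q̄ ≤ c_H, then x̂ = 0 is an equilibrium; (iv) if Q̲ ≤ c_H/((1−a)·θ0) ≤ Q̄, then there exists x̂ ∈ [1/2, 1] with (1−a)·θ0·Q(x̂) =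 c_H, which is an equilibrium. -/
/-- Theorem 2, equilibrium structure: Under content restriction
with coefficient `a ∈ [0,1)`, payoffs `u_a(L,x) = a·θ0·Q(x)` and
`u_a(H,x) = θ0·Q(x) − c_H` where `Q(x) = Q1(x)+Q1(1−x)` with `Q1` continuous,
nondecreasing, concave, `Q1(0) ≥ 0`: (i) any interior equilibrium satisfies
`(1−a)·θ0·Q(x̂) = c_H`; (ii) if `(1−a)·θ0·Q(0) > c_H` then `H` strictly
dominates everywhere and `x̂ = 1` is the unique equilibrium; (iii) if
`(1−a)·θ0·Q(1/2) ≤ c_H` then `x̂ = 0` is an equilibrium; (iv) if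
`Q(0) ≤ c_H/((1−a)θ0) ≤ Q(1/2)` there is an equilibrium `x̂ ∈ [1/2,1]` with
`(1−a)·θ0·Q(x̂) = c_H`. -/
theorem stmt_10 (θ0 cH a : ℝ) (hθ : 0 < θ0) (hc : 0 < cH)
    (ha : a ∈ Set.Ico (0 : ℝ) 1) (Q1 : ℝ → ℝ)
    (hcont : ContinuousOn Q1 (Set.Icc 0 1))
    (hmono : MonotoneOn Q1 (Set.Icc 0 1))
    (hconc : ConcaveOn ℝ (Set.Icc 0 1) Q1) (h0 : 0 ≤ Q1 0) :
    let Q : ℝ → ℝ := fun x => Q1 x + Q1 (1 - x)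
    let uL : ℝ → ℝ := fun x => a * θ0 * Q x
    let uH : ℝ → ℝ := fun x => θ0 * Q x - cH
    let eqm : ℝ → Prop := fun x => x ∈ Set.Icc (0 : ℝ) 1 ∧
      (0 < x → uL x ≤ uH x) ∧ (x < 1 → uH x ≤ uL x)
    (∀ x ∈ Set.Ioo (0 : ℝ) 1, eqm x → (1 - a) * θ0 * Q x = cH) ∧
    (cH < (1 - a) * θ0 * Q 0 →
      (∀ x ∈ Set.Icc (0 : ℝ) 1, uL x < uH x) ∧ eqm 1 ∧ ∀ x, eqm x → x = 1) ∧
    ((1 - a) * θ0 * Q (1 / 2) ≤ cH → eqm 0) ∧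
    (Q 0 ≤ cH / ((1 - a) * θ0) → cH / ((1 - a) * θ0) ≤ Q (1 / 2) →
      ∃ x ∈ Set.Icc (1 / 2 : ℝ) 1, (1 - a) * θ0 * Q x = cH ∧ eqm x) := by
  intro Q uL uH eqm
  obtain ⟨ha0, ha1⟩ := ha
  have hpos : 0 < (1 - a) * θ0 := mul_pos (by linarith) hθ
  have h01 : (0:ℝ) ∈ Set.Icc (0:ℝ) 1 := by constructor <;> norm_num
  have h11 : (1:ℝ) ∈ Set.Icc (0:ℝ) 1 := by constructor <;> norm_num
  -- Q x ≥ Q 0 for x ∈ [0,1], by concavity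
  have hQlow : ∀ x ∈ Set.Icc (0:ℝ) 1, Q 0 ≤ Q x := by
    intro x hx
    obtain ⟨hx0, hx1⟩ := hx
    have h1 := hconc.2 h01 h11 (by linarith : (0:ℝ) ≤ 1 - x) (by linarith : (0:ℝ) ≤ x)
      (by ring)
    have h2 := hconc.2 h01 h11 (by linarith : (0:ℝ) ≤ x) (by linarith : (0:ℝ) ≤ 1 - x)
      (by ring)
    simp only [smul_eq_mul, mul_zero, mul_one, zero_add, add_zero] at h1 h2
    simp only [Q]
    norm_num
    nlinarith [h1, h2]
  -- Q 0 ≤ Q (1/2)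
  have hQmid : Q 0 ≤ Q (1/2) := hQlow (1/2) (by constructor <;> norm_num)
  -- part (i)
  have part1 : ∀ x ∈ Set.Ioo (0:ℝ) 1, eqm x → (1 - a) * θ0 * Q x = cH := by
    intro x hx hex
    obtain ⟨-, hH, hL⟩ := hex
    have h1 := hH hx.1
    have h2 := hL hx.2
    simp only [uL, uH] at h1 h2
    nlinarith
  refine ⟨part1, ?_, ?_, ?_⟩
  · -- part (ii)
    intro hdom
    have hstrict : ∀ x ∈ Set.Icc (0:ℝ) 1, uL x < uH x := by
      intro x hx
      have := hQlow x hx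
      simp only [uL, uH]
      nlinarith
    refine ⟨hstrict, ⟨h11, fun _ => le_of_lt (hstrict 1 h11), fun h => absurd h (lt_irrefl 1)⟩,
      ?_⟩
    intro x hex
    obtain ⟨hx, -, hL⟩ := hex
    by_contra hne
    have hx1 : x < 1 := lt_of_le_of_ne hx.2 hne
    exact absurd (hL hx1) (not_le.mpr (hstrict x hx))
  · -- part (iii)
    intro hle
    refine ⟨h01, fun h => absurd h (lt_irrefl 0), fun _ => ?_⟩
    simp only [uL, uH]
    have h1 : (1 - a) * θ0 * Q 0 ≤ cH :=
      le_trans (mul_le_mul_of_nonneg_left hQmid hpos.le) hle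
    linarith [h1]
  · -- part (iv)
    intro hlb hub
    set c := cH / ((1 - a) * θ0) with hcdef
    have hceq : (1 - a) * θ0 * c = cH := by
      rw [hcdef, mul_div_assoc', mul_div_right_comm, div_self hpos.ne', one_mul]
    -- Q continuous on [0,1]
    have hQcont : ContinuousOn Q (Set.Icc (0:ℝ) 1) := by
      apply ContinuousOn.add hcont
      apply hcont.comp ((continuous_const.sub continuous_id).continuousOn)
      intro x hx
      rw [Set.mem_Icc] at hx ⊢
      simp only [Pi.sub_apply, id_eq]
      constructor <;> linarith [hx.1, hx.2]
    have hsub : Set.Icc ((1:ℝ)/2) 1 ⊆ Set.Icc (0:ℝ) 1 := by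
      intro x hx; constructor <;> [linarith [hx.1]; exact hx.2]
    have hQ10 : Q 1 = Q 0 := by simp only [Q]; norm_num; ring
    have hivt := intermediate_value_Icc' (by norm_num : (1:ℝ)/2 ≤ 1)
      (hQcont.mono hsub)
    have hmem : c ∈ Set.Icc (Q 1) (Q (1/2)) := by
      rw [hQ10]; exact ⟨hlb, hub⟩
    obtain ⟨x, hx, hQx⟩ := hivt hmem
    refine ⟨x, hx, ?_, ?_⟩
    · rw [hQx]; exact hceq
    · have heq : uL x = uH x := by
        simp only [uL, uH]
        have : (1 - a) * θ0 * Q x = cH := by rw [hQx]; exact hceq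
        nlinarith
      exact ⟨hsub hx, fun _ => le_of_eq heq, fun _ => le_of_eq heq.symm⟩
end

section
/- (Claim in the proof of Theorem 2) Let θ0 > 0, c_H > 0, let Q1 : [0,1] → ℝ be nondecreasing and concave with Q1(0) ≥ 0, and set Q(x) = Q1(x)+Q1(1−x). For every content-restriction coefficient a ∈ [0,1], there exists an equilibrium x̂ ∈ {0,1} of the a-restricted game whose social welfare is at most θ0·Q(0): specifically, if (1−a)·θ0·Q(0) ≤ c_H then x̂ = 0 is an equilibrium with welfare a·θ0·Q(0) ≤ θ0·Q(0), and if (1−a)·θ0·Q(0) > c_H then x̂ = 1 is an equilibrium with welfare θ0·Q(0) − c_H < θ0·Q(0). Hence the maximum over a ∈ [0,1] of the worst-equilibrium welfare equals θ0·Q(0), attained at a = 1. -/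
/-- Claim in the proof of Theorem 2: For every
content-restriction coefficient `a ∈ [0,1]` there is an equilibrium in `{0,1}`
whose social welfare is at most `θ0·Q(0)`: if `(1−a)·θ0·Q(0) ≤ c_H` then
`x̂ = 0` is an equilibrium with welfare `a·θ0·Q(0) ≤ θ0·Q(0)`, otherwise
`x̂ = 1` is an equilibrium with welfare `θ0·Q(0) − c_H < θ0·Q(0)`. Hence the
max over `a` of the worst-equilibrium welfare is `θ0·Q(0)`, attained at
`a = 1` (whose unique equilibrium is `0` with welfare exactly `θ0·Q(0)`). -/
theorem stmt_11 (θ0 cH : ℝ) (hθ : 0 < θ0) (hc : 0 < cH) (Q1 : ℝ → ℝ)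
    (hmono : MonotoneOn Q1 (Set.Icc 0 1))
    (hconc : ConcaveOn ℝ (Set.Icc 0 1) Q1) (h0 : 0 ≤ Q1 0) :
    let Q : ℝ → ℝ := fun x => Q1 x + Q1 (1 - x)
    let eqm : ℝ → ℝ → Prop := fun a x => x ∈ Set.Icc (0 : ℝ) 1 ∧
      (0 < x → a * θ0 * Q x ≤ θ0 * Q x - cH) ∧
      (x < 1 → θ0 * Q x - cH ≤ a * θ0 * Q x)
    let W : ℝ → ℝ → ℝ := fun a x => (1 - x) * (a * θ0 * Q x) + x * (θ0 * Q x - cH)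
    (∀ a ∈ Set.Icc (0 : ℝ) 1,
      ((1 - a) * θ0 * Q 0 ≤ cH → eqm a 0 ∧ W a 0 ≤ θ0 * Q 0) ∧
      (cH < (1 - a) * θ0 * Q 0 → eqm a 1 ∧ W a 1 < θ0 * Q 0)) ∧
    eqm 1 0 ∧ (∀ x, eqm 1 x → x = 0) ∧ W 1 0 = θ0 * Q 0 := by
  intro Q eqm W
  have hQ01 : Q 1 = Q 0 := by simp [Q]; ring
  have hQ0 : 0 ≤ Q 0 := by
    have h1 : Q1 0 ≤ Q1 1 := hmono (by norm_num) (by norm_num) (by norm_num)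
    show (0:ℝ) ≤ Q1 0 + Q1 (1 - 0); norm_num; linarith
  refine ⟨?_, ?_, ?_, ?_⟩
  · intro a ha
    obtain ⟨ha0, ha1⟩ := ha
    constructor
    · intro h
      refine ⟨⟨⟨le_refl _, by norm_num⟩, by intro h'; linarith, ?_⟩, ?_⟩
      · intro _; nlinarith
      · simp only [W]; nlinarith [mul_nonneg hθ.le hQ0]
    · intro h
      refine ⟨⟨⟨by norm_num, le_refl _⟩, ?_, by intro h'; linarith⟩, ?_⟩
      · intro _; rw [hQ01]; nlinarith
      · simp only [W, hQ01]; nlinarith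
  · refine ⟨⟨le_refl _, by norm_num⟩, by intro h; linarith, ?_⟩
    intro _; simp only [one_mul]; linarith
  · rintro x ⟨⟨hx0, hx1⟩, h1, h2⟩
    by_contra h
    have hx : 0 < x := lt_of_le_of_ne hx0 (Ne.symm h)
    have := h1 hx
    simp only [one_mul] at this
    linarith
  · simp only [W]; ring
end

section
/- (Theorem 3, thresholds and the benefit of user diversity) Let 0 < θ1 < θ2, θ0 = (θ1+θ2)/2, 0 < Q̲ < Q̄, and c_H > 0. Then: (a) θ0·Q̄ − ((θ1·Q̄ + θ2·Q̲)/(2·θ2·Q̲))·c_H > θ0·Q̲ if and only if c_H < (θ1+θ2)·(Q̄−Q̲)·θ2·Q̲/(θ1·Q̄ + θ2·Q̲); (b) if θ2/θ1 > Q̄/Q̲ (i.e., θ2·Q̲ > θ1·Q̄), then (θ1·Q̄ + θ2·Q̲)/(2·θ2·Q̲) < 1, so the heterogeneous diversity welfare θ0·Q̄ − ((θ1·Q̄ + θ2·Q̲)/(2·θ2·Q̲))·c_H strictly exceeds the homogeneous diversity welfare θ0·Q̄ − c_H, and the threshold (θ1+θ2)·(Q̄−Q̲)·θ2·Q̲/(θ1·Q̄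 + θ2·Q̲) strictly exceeds the homogeneous threshold θ0·(Q̄ − Q̲). -/
/-- Theorem 3, thresholds and the benefit of user diversity:
For `0 < θ1 < θ2`, `θ0 = (θ1+θ2)/2`, `0 < Q̲ < Q̄`, `c_H > 0`:
(a) `θ0·Q̄ − ((θ1·Q̄+θ2·Q̲)/(2θ2·Q̲))·c_H > θ0·Q̲` iff
`c_H < (θ1+θ2)(Q̄−Q̲)θ2·Q̲/(θ1·Q̄+θ2·Q̲)`;
(b) if `θ2·Q̲ > θ1·Q̄` then `(θ1·Q̄+θ2·Q̲)/(2θ2·Q̲) < 1`, the heterogeneous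
diversity welfare strictly exceeds the homogeneous one `θ0·Q̄ − c_H`, and the
heterogeneous threshold strictly exceeds the homogeneous threshold
`θ0·(Q̄−Q̲)`. -/
theorem stmt_12 (θ1 θ2 Qlo Qhi cH : ℝ) (h1 : 0 < θ1) (h12 : θ1 < θ2)
    (hQ0 : 0 < Qlo) (hQ : Qlo < Qhi) (hc : 0 < cH) :
    let θ0 := (θ1 + θ2) / 2
    ((θ0 * Qlo < θ0 * Qhi - ((θ1 * Qhi + θ2 * Qlo) / (2 * θ2 * Qlo)) * cH) ↔
      cH < (θ1 + θ2) * (Qhi - Qlo) * θ2 * Qlo / (θ1 * Qhi + θ2 * Qlo)) ∧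
    (θ1 * Qhi < θ2 * Qlo →
      (θ1 * Qhi + θ2 * Qlo) / (2 * θ2 * Qlo) < 1 ∧
      θ0 * Qhi - cH < θ0 * Qhi - ((θ1 * Qhi + θ2 * Qlo) / (2 * θ2 * Qlo)) * cH ∧
      θ0 * (Qhi - Qlo) <
        (θ1 + θ2) * (Qhi - Qlo) * θ2 * Qlo / (θ1 * Qhi + θ2 * Qlo)) := by
  intro θ0
  have h2 : 0 < θ2 := h1.trans h12
  have hQhi : 0 < Qhi := hQ0.trans hQ
  have hden : 0 < θ1 * Qhi + θ2 * Qlo := by positivity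
  have hden2 : 0 < 2 * θ2 * Qlo := by positivity
  have hd : (θ1 * Qhi + θ2 * Qlo) / (2 * θ2 * Qlo) * (2 * θ2 * Qlo)
      = θ1 * Qhi + θ2 * Qlo := div_mul_cancel₀ _ hden2.ne'
  constructor
  · rw [lt_div_iff₀ hden, lt_sub_iff_add_lt]
    constructor
    · intro h
      have h' : (θ1 + θ2) / 2 * Qlo + (θ1 * Qhi + θ2 * Qlo) / (2 * θ2 * Qlo) * cH
          < (θ1 + θ2) / 2 * Qhi := h
      nlinarith [mul_lt_mul_of_pos_right h' hden2, hd]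
    · intro h
      show (θ1 + θ2) / 2 * Qlo + _ * cH < (θ1 + θ2) / 2 * Qhi
      rw [← mul_lt_mul_iff_left₀ hden2]
      nlinarith [hd]
  · intro hdiv
    have key : (θ1 * Qhi + θ2 * Qlo) / (2 * θ2 * Qlo) < 1 := by
      rw [div_lt_one hden2]; nlinarith
    refine ⟨key, by nlinarith, ?_⟩
    rw [lt_div_iff₀ hden]
    show (θ1 + θ2) / 2 * (Qhi - Qlo) * _ < _
    nlinarith [mul_pos (mul_pos (by linarith : (0:ℝ) < θ1 + θ2) (by linarith : (0:ℝ) < Qhi - Qlo)) (sub_pos.mpr hdiv)]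
end

section
/- (Proposition: combined mechanism, PoA ≥ 0.7) Let Q1 : [0,1] → ℝ be nondecreasing and concave with Q1(0) = 0, let 0 < θ1 ≤ θ2, θ0 = (θ1+θ2)/2, and c_H > 0. Set Q(x,1) = Q1(x)+Q1(1−x), Q(x,1/2) = Q1(x)+Q1(1/2−x), Q̲ = Q1(1), and Q̄ = 2·Q1(1/2). Define the candidate welfares C1 = θ0·Q̲; C2 = θ0·Q̄ − (θ0/θ2)·c_H; C3 = sup of θ0·Q(x,1) − x·c_H over all x ∈ [0,1/2] satisfying θ1·Q(x,1) ≥ x·c_H; and C4 = sup over x ∈ [0,1/2] of (1/2)·θ2·Q(x,1/2) − x·c_H. Then max{C1, C2, C3, C4} ≥ 0.7 · sup over x ∈ [0,1] of (θ0·Q(x,1) − x·c_H). Consequently the combined side-payment and content-restriction mechanism achieves price of anarchy PoA_ag ≥ 0.7. -/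
set_option maxHeartbeats 4000000

private lemma conc_aux {Q1 : ℝ → ℝ} (hconc : ConcaveOn ℝ (Set.Icc 0 1) Q1)
    {v w α : ℝ} (hv : v ∈ Set.Icc (0:ℝ) 1) (hw : w ∈ Set.Icc (0:ℝ) 1)
    (ha : 0 ≤ α) (hb : α ≤ 1) :
    α * Q1 v + (1 - α) * Q1 w ≤ Q1 (α * v + (1 - α) * w) := by
  have := hconc.2 hv hw ha (by linarith : (0:ℝ) ≤ 1 - α) (by ring)
  simpa using this

private lemma cancel_pos {c a b : ℝ} (hc : 0 < c) (h : c * a < c * b) : a < b :=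
  (mul_lt_mul_iff_right₀ hc).mp h

private lemma poa_branch1 (r p t : ℝ) (hrt : r + t = 2) (hr : 0 < r) (hp : r < p) (hp1 : p < 1)
    (h31 : t*(3/10+7/10*p)^2 + (t/2)*(3/10+7/10*p) - p
        < 2*(3/10+7/10*p)*(7/10*(1-p)+p))
    (h4 : t < 14/5*(1-p))
    (hstar : (t-7/10*(1-p)-p)*(p*(1-r)+r*(1/2-7/10*(1-p)))
        < t*(7/10*(1-p))*(p-r/2)) : False := by
  have ht : t = 2 - r := by linarith
  subst ht
  nlinarith [sq_nonneg (p-1/11), sq_nonneg (r-p), mul_pos hr (sub_pos.2 hp), sq_nonneg p,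
    sq_nonneg r, mul_pos hr hr, sq_nonneg (p-r),
    mul_nonneg (le_of_lt hr) (le_of_lt (sub_pos.2 hp)), sq_nonneg (1-p), sq_nonneg (p-1/10)]

private lemma poa_branch2 (r p t μ : ℝ) (hrt : r + t = 2) (hr : 0 < r) (hp : r < p) (hp1 : p < 1)
    (hμ2 : 1/2 ≤ μ)
    (h1n : μ < 7/10*(1-p))
    (hc : 0 < p*(1-r)+r*(1/2-7/10*(1-p)))
    (hKEY5 : μ*(p*(1-r)+r*(1/2-7/10*(1-p))) < (7/10*(1-p))*(p-r/2))
    (hCx : (t/4)*(1-μ) < (7/10*(1-p)+p)/2)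
    (hCX : (t^2*(3/10+7/10*p)/4)*(1-μ) < (7/10*(1-p)+p)*p) : False := by
  have ht : t = 2 - r := by linarith
  subst ht
  nlinarith [mul_pos hr (sub_pos.2 hp), sq_nonneg (p-r), sq_nonneg (μ-1/2), sq_nonneg (p-3/10),
    mul_nonneg (sub_nonneg.2 hμ2) (le_of_lt (sub_pos.2 hp)), mul_pos hr hr, sq_nonneg (1-p),
    mul_nonneg (sub_nonneg.2 hμ2) (le_of_lt hr)]

/-- Combined mechanism, PoA ≥ 0.7: With `Q1` nondecreasing and
concave on `[0,1]`, `Q1(0) = 0`, types `0 < θ1 ≤ θ2`, `θ0 = (θ1+θ2)/2`,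
`c_H > 0`, and candidate welfares `C1 = θ0·Q1(1)`,
`C2 = θ0·(2Q1(1/2)) − (θ0/θ2)·c_H`,
`C3 = sup {θ0·Q(x,1) − x·c_H : x ∈ [0,1/2], θ1·Q(x,1) ≥ x·c_H}`,
`C4 = sup_{x ∈ [0,1/2]} ((1/2)·θ2·Q(x,1/2) − x·c_H)`, it holds that
`max{C1,C2,C3,C4} ≥ 0.7 · sup_{x ∈ [0,1]} (θ0·Q(x,1) − x·c_H)`;
i.e. the combined mechanism achieves `PoA_ag ≥ 0.7`. -/
theorem stmt_13 (Q1 : ℝ → ℝ) (hmono : MonotoneOn Q1 (Set.Icc 0 1))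
    (hconc : ConcaveOn ℝ (Set.Icc 0 1) Q1) (h0 : Q1 0 = 0)
    (θ1 θ2 cH : ℝ) (hθ1 : 0 < θ1) (h12 : θ1 ≤ θ2) (hc : 0 < cH) :
    let θ0 := (θ1 + θ2) / 2
    let Q : ℝ → ℝ := fun x => Q1 x + Q1 (1 - x)
    let Qh : ℝ → ℝ := fun x => Q1 x + Q1 (1 / 2 - x)
    let C1 := θ0 * Q1 1
    let C2 := θ0 * (2 * Q1 (1 / 2)) - (θ0 / θ2) * cH
    let C3 := sSup {w : ℝ | ∃ x ∈ Set.Icc (0 : ℝ) (1 / 2),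
      x * cH ≤ θ1 * Q x ∧ w = θ0 * Q x - x * cH}
    let C4 := sSup {w : ℝ | ∃ x ∈ Set.Icc (0 : ℝ) (1 / 2),
      w = (1 / 2) * θ2 * Qh x - x * cH}
    (0.7 : ℝ) * sSup {w : ℝ | ∃ x ∈ Set.Icc (0 : ℝ) 1, w = θ0 * Q x - x * cH} ≤
      max (max C1 C2) (max C3 C4) := by
  intro θ0 Q Qh C1 C2 C3 C4
  have hθ2 : 0 < θ2 := lt_of_lt_of_le hθ1 h12
  have hθ0 : 0 < θ0 := by show (0:ℝ) < (θ1 + θ2) / 2; linarith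
  set M := max (max C1 C2) (max C3 C4) with hM_def
  have hC1M : C1 ≤ M := le_trans (le_max_left _ _) (le_max_left _ _)
  have hC2M : C2 ≤ M := le_trans (le_max_right _ _) (le_max_left _ _)
  have hC3M : C3 ≤ M := le_trans (le_max_left _ _) (le_max_right _ _)
  have hC4M : C4 ≤ M := le_trans (le_max_right _ _) (le_max_right _ _)
  have mem0 : (0:ℝ) ∈ Set.Icc (0:ℝ) 1 := by constructor <;> norm_num
  have mem1 : (1:ℝ) ∈ Set.Icc (0:ℝ) 1 := by constructor <;> norm_num
  have memh : (1/2:ℝ) ∈ Set.Icc (0:ℝ) 1 := by constructor <;> norm_num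
  have hQ11 : (0:ℝ) ≤ Q1 1 := by
    have := hmono mem0 mem1 zero_le_one; rw [h0] at this; exact this
  have hbdd3 : BddAbove {w : ℝ | ∃ x ∈ Set.Icc (0 : ℝ) (1 / 2),
      x * cH ≤ θ1 * Q x ∧ w = θ0 * Q x - x * cH} := by
    refine ⟨θ0 * (Q1 1 + Q1 1), ?_⟩
    rintro w ⟨x, hx, _, rfl⟩
    have hx1 : x ∈ Set.Icc (0:ℝ) 1 := ⟨hx.1, by linarith [hx.2]⟩
    have hx1' : (1-x) ∈ Set.Icc (0:ℝ) 1 := ⟨by linarith [hx.2], by linarith [hx.1]⟩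
    have h1 : Q1 x ≤ Q1 1 := hmono hx1 mem1 hx1.2
    have h2 : Q1 (1-x) ≤ Q1 1 := hmono hx1' mem1 hx1'.2
    have hQx : Q x = Q1 x + Q1 (1-x) := rfl
    rw [hQx]
    nlinarith only [mul_nonneg hx.1 hc.le,
      mul_le_mul_of_nonneg_left (add_le_add h1 h2) hθ0.le]
  have hbdd4 : BddAbove {w : ℝ | ∃ x ∈ Set.Icc (0 : ℝ) (1 / 2),
      w = (1 / 2) * θ2 * Qh x - x * cH} := by
    refine ⟨(1/2) * θ2 * (Q1 1 + Q1 1), ?_⟩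
    rintro w ⟨x, hx, rfl⟩
    have hx1 : x ∈ Set.Icc (0:ℝ) 1 := ⟨hx.1, by linarith [hx.2]⟩
    have hx2 : (1/2 - x) ∈ Set.Icc (0:ℝ) 1 := ⟨by linarith [hx.2], by linarith [hx.1]⟩
    have h1 : Q1 x ≤ Q1 1 := hmono hx1 mem1 hx1.2
    have h2 : Q1 (1/2-x) ≤ Q1 1 := hmono hx2 mem1 hx2.2
    have hQx : Qh x = Q1 x + Q1 (1/2-x) := rfl
    rw [hQx]
    nlinarith only [mul_nonneg hx.1 hc.le,
      mul_le_mul_of_nonneg_left (add_le_add h1 h2) (by positivity : (0:ℝ) ≤ (1/2)*θ2)]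
  -- the key pointwise bound
  have key : ∀ z : ℝ, 0 ≤ z → z ≤ 1/2 →
      7/10 * (θ0 * (Q1 z + Q1 (1-z)) - z * cH) ≤ M := by
    intro z hz0 hz2
    have memz : z ∈ Set.Icc (0:ℝ) 1 := ⟨hz0, by linarith⟩
    have memz' : (1-z) ∈ Set.Icc (0:ℝ) 1 := ⟨by linarith, by linarith⟩
    have memhz : (1/2 - z) ∈ Set.Icc (0:ℝ) 1 := ⟨by linarith, by linarith⟩
    -- chord bounds
    have cc1 : z * Q1 1 ≤ Q1 z := by
      have h := conc_aux hconc mem1 mem0 hz0 (by linarith)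
      rw [h0, show z*1 + (1-z)*0 = z by ring] at h
      linarith only [h]
    have cc2 : (1-z) * Q1 1 ≤ Q1 (1-z) := by
      have h := conc_aux hconc mem0 mem1 hz0 (by linarith)
      rw [h0, show z*0 + (1-z)*1 = 1-z by ring] at h
      linarith only [h]
    have hqU : Q1 1 ≤ Q1 z + Q1 (1-z) := by linarith only [cc1, cc2]
    have hq2m : Q1 z + Q1 (1-z) ≤ 2 * Q1 (1/2) := by
      have h := conc_aux hconc memz memz' (by norm_num : (0:ℝ) ≤ 1/2) (by norm_num)
      rw [show (1/2)*z + (1-1/2)*(1-z) = 1/2 by ring] at h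
      linarith only [h]
    have hHm : (1-2*z) * Q1 (1/2) ≤ Q1 (1/2 - z) := by
      have h := conc_aux hconc memh mem0 (by linarith : (0:ℝ) ≤ 1-2*z) (by linarith)
      rw [h0, show (1-2*z)*(1/2) + (1-(1-2*z))*0 = 1/2 - z by ring] at h
      linarith only [h]
    have hA0 : 0 ≤ Q1 z := by
      have := hmono mem0 memz hz0; rw [h0] at this; exact this
    have hAU : Q1 z ≤ Q1 1 := hmono memz mem1 memz.2
    have hBU : Q1 (1-z) ≤ Q1 1 := hmono memz' mem1 memz'.2
    -- trivial case w ≤ 0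
    rcases le_or_gt (θ0 * (Q1 z + Q1 (1-z)) - z * cH) 0 with hw0 | hw0
    · have hC1e : θ0 * Q1 1 ≤ M := hC1M
      linarith only [hC1e, hw0, mul_nonneg hθ0.le hQ11]
    -- feasible case: element of C3
    rcases le_or_gt (z * cH) (θ1 * (Q1 z + Q1 (1-z))) with hfeas | hfeas
    · have hmem : (θ0 * Q z - z * cH) ∈ {w : ℝ | ∃ x ∈ Set.Icc (0 : ℝ) (1 / 2),
          x * cH ≤ θ1 * Q x ∧ w = θ0 * Q x - x * cH} := ⟨z, ⟨hz0, hz2⟩, hfeas, rfl⟩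
      have hle : θ0 * Q z - z * cH ≤ M := le_trans (le_csSup hbdd3 hmem) hC3M
      have hQz : Q z = Q1 z + Q1 (1-z) := rfl
      rw [hQz] at hle
      linarith only [hle, hw0]
    -- main case
    have hz0' : 0 < z := by
      rcases eq_or_lt_of_le hz0 with he | hlt
      · exfalso
        rw [← he] at hfeas
        have h1 : (0:ℝ) ≤ Q1 (1-0) := by rw [show (1:ℝ)-0 = 1 by ring]; exact hQ11
        have h2 : (0:ℝ) ≤ θ1 * (Q1 0 + Q1 (1-0)) := by
          rw [h0]; nlinarith only [h1, hθ1]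
        simp only [zero_mul] at hfeas
        linarith only [h2, hfeas]
      · exact hlt
    have hq0 : 0 < Q1 z + Q1 (1-z) := by
      nlinarith only [hw0, mul_nonneg hz0 hc.le, hθ0]
    have hy0 : 0 < z * cH := mul_pos hz0' hc
    by_contra hMc
    push_neg at hMc
    -- strict candidate bounds
    have G1 : θ0 * Q1 1 < 7/10 * (θ0 * (Q1 z + Q1 (1-z)) - z * cH) :=
      lt_of_le_of_lt hC1M hMc
    have G2 : θ0 * (2 * Q1 (1/2)) - (θ0/θ2) * cH < 7/10 * (θ0 * (Q1 z + Q1 (1-z)) - z * cH) :=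
      lt_of_le_of_lt hC2M hMc
    have hmem3 : ((1:ℝ)/2 * θ2 * Qh 0 - 0 * cH) ∈ {w : ℝ | ∃ x ∈ Set.Icc (0 : ℝ) (1 / 2),
        w = (1 / 2) * θ2 * Qh x - x * cH} := ⟨0, ⟨le_refl _, by norm_num⟩, rfl⟩
    have G3 : (1:ℝ)/2 * θ2 * Q1 (1/2) < 7/10 * (θ0 * (Q1 z + Q1 (1-z)) - z * cH) := by
      have h1 : (1:ℝ)/2 * θ2 * Qh 0 - 0 * cH ≤ M := le_trans (le_csSup hbdd4 hmem3) hC4M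
      have h2 : Qh 0 = Q1 0 + Q1 (1/2 - 0) := rfl
      rw [h2, h0, show (1/2 - 0 : ℝ) = 1/2 by norm_num] at h1
      have h3 : (1:ℝ)/2 * θ2 * (0 + Q1 (1/2)) - 0 * cH = 1/2 * θ2 * Q1 (1/2) := by ring
      rw [h3] at h1
      exact lt_of_le_of_lt h1 hMc
    have hmem4 : ((1:ℝ)/2 * θ2 * Qh z - z * cH) ∈ {w : ℝ | ∃ x ∈ Set.Icc (0 : ℝ) (1 / 2),
        w = (1 / 2) * θ2 * Qh x - x * cH} := ⟨z, ⟨hz0, hz2⟩, rfl⟩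
    have G4 : (1:ℝ)/2 * θ2 * (Q1 z + Q1 (1/2 - z)) - z * cH
        < 7/10 * (θ0 * (Q1 z + Q1 (1-z)) - z * cH) := by
      have h1 : (1:ℝ)/2 * θ2 * Qh z - z * cH ≤ M := le_trans (le_csSup hbdd4 hmem4) hC4M
      have h2 : Qh z = Q1 z + Q1 (1/2 - z) := rfl
      rw [h2] at h1
      exact lt_of_le_of_lt h1 hMc
    -- interior element of C3
    set lam := θ1 * Q1 1 / (z * cH) with hlam_def
    have hlam0 : 0 ≤ lam := by
      apply div_nonneg _ hy0.le
      exact mul_nonneg hθ1.le hQ11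
    have hlam1 : lam ≤ 1 := by
      rw [hlam_def, div_le_one hy0]
      nlinarith only [hfeas, mul_le_mul_of_nonneg_left hqU hθ1.le]
    set x' := lam * z with hx'_def
    have hx'0 : 0 ≤ x' := mul_nonneg hlam0 hz0
    have hx'z : x' ≤ z := by
      have := mul_le_mul_of_nonneg_right hlam1 hz0
      rw [one_mul] at this
      exact this
    have memx' : x' ∈ Set.Icc (0:ℝ) 1 := ⟨hx'0, by linarith⟩
    have memx'' : (1-x') ∈ Set.Icc (0:ℝ) 1 := ⟨by linarith, by linarith⟩
    have hx'cH : x' * cH = θ1 * Q1 1 := by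
      rw [hx'_def, hlam_def]
      field_simp
    have cu1 : x' * Q1 1 ≤ Q1 x' := by
      have h := conc_aux hconc mem1 mem0 hx'0 (by linarith)
      rw [h0, show x'*1 + (1-x')*0 = x' by ring] at h
      linarith only [h]
    have cu2 : (1-x') * Q1 1 ≤ Q1 (1-x') := by
      have h := conc_aux hconc mem0 mem1 hx'0 (by linarith)
      rw [h0, show x'*0 + (1-x')*1 = 1-x' by ring] at h
      linarith only [h]
    have hqU' : Q1 1 ≤ Q1 x' + Q1 (1-x') := by linarith only [cu1, cu2]
    have hfeas' : x' * cH ≤ θ1 * Q x' := by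
      have hQx' : Q x' = Q1 x' + Q1 (1-x') := rfl
      rw [hQx', hx'cH]
      exact mul_le_mul_of_nonneg_left hqU' hθ1.le
    have hv1 : lam * Q1 z ≤ Q1 x' := by
      have h := conc_aux hconc memz mem0 hlam0 hlam1
      rw [h0, show lam*z + (1-lam)*0 = x' by rw [hx'_def]; ring] at h
      linarith only [h]
    have hv2 : lam * Q1 (1-z) + (1-lam) * Q1 1 ≤ Q1 (1-x') := by
      have h := conc_aux hconc memz' mem1 hlam0 hlam1
      rw [show lam*(1-z) + (1-lam)*1 = 1-x' by rw [hx'_def]; ring] at h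
      exact h
    have hmem5 : (θ0 * Q x' - x' * cH) ∈ {w : ℝ | ∃ x ∈ Set.Icc (0 : ℝ) (1 / 2),
        x * cH ≤ θ1 * Q x ∧ w = θ0 * Q x - x * cH} := ⟨x', ⟨hx'0, by linarith⟩, hfeas', rfl⟩
    have G5 : θ0 * (lam * (Q1 z + Q1 (1-z)) + (1-lam) * Q1 1) - θ1 * Q1 1
        < 7/10 * (θ0 * (Q1 z + Q1 (1-z)) - z * cH) := by
      have h1 : θ0 * Q x' - x' * cH ≤ M := le_trans (le_csSup hbdd3 hmem5) hC3M
      have hQx' : Q x' = Q1 x' + Q1 (1-x') := rfl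
      rw [hQx', hx'cH] at h1
      have h2 : θ0 * (lam * (Q1 z + Q1 (1-z)) + (1-lam) * Q1 1)
          ≤ θ0 * (Q1 x' + Q1 (1-x')) := by
        apply mul_le_mul_of_nonneg_left _ hθ0.le
        linarith only [hv1, hv2]
      exact lt_of_le_of_lt (by linarith only [h1, h2]) hMc
    -- normalized variables
    set r := θ1 / θ0 with hr_def
    set t := θ2 / θ0 with ht_def
    set p := (z * cH) / (θ0 * (Q1 z + Q1 (1-z))) with hp_def
    set μ := Q1 1 / (Q1 z + Q1 (1-z)) with hmu_def
    have hpq : 0 < θ0 * (Q1 z + Q1 (1-z)) := mul_pos hθ0 hq0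
    have hθ1e : θ1 = r * θ0 := by rw [hr_def]; field_simp
    have hθ2e : θ2 = t * θ0 := by rw [ht_def]; field_simp
    have hye : z * cH = p * (θ0 * (Q1 z + Q1 (1-z))) := by rw [hp_def]; field_simp
    have hUe : Q1 1 = μ * (Q1 z + Q1 (1-z)) := by rw [hmu_def]; field_simp
    have h2θ : θ1 + θ2 = 2 * θ0 := by show θ1 + θ2 = 2*((θ1+θ2)/2); ring
    have hrt : r + t = 2 := by rw [hr_def, ht_def]; field_simp; linarith only [h2θ]
    have hr0 : 0 < r := div_pos hθ1 hθ0
    have ht0 : 0 < t := div_pos hθ2 hθ0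
    have hrp : r < p := by
      rw [hr_def, hp_def, div_lt_div_iff₀ hθ0 hpq]
      nlinarith only [mul_lt_mul_of_pos_right hfeas hθ0]
    have hp1 : p < 1 := by rw [hp_def, div_lt_one hpq]; linarith only [hw0]
    have hp0 : 0 < p := lt_trans hr0 hrp
    have hmu2 : 1/2 ≤ μ := by
      rw [hmu_def, le_div_iff₀ hq0]; linarith only [hAU, hBU]
    have hmu1 : μ ≤ 1 := by rw [hmu_def, div_le_one hq0]; linarith only [hqU]
    have hs0 : 0 < 3/10 + 7/10 * p := by linarith only [hp0]
    -- normalized candidate inequalities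
    have h1n : μ < 7/10 * (1-p) := by
      have g := G1
      rw [hUe, hye] at g
      refine cancel_pos hpq ?_
      linarith only [g]
    have g2a : θ0 * (Q1 z + Q1 (1-z)) - 7/10 * (θ0 * (Q1 z + Q1 (1-z)) - z * cH)
        < (θ0/θ2) * cH := by
      linarith only [G2, mul_le_mul_of_nonneg_left hq2m hθ0.le]
    have g2b : ((θ0/θ2) * cH) * (θ2 * z) = θ0 * (z * cH) := by field_simp
    have E2 : (θ0 * (Q1 z + Q1 (1-z)) - 7/10 * (θ0 * (Q1 z + Q1 (1-z)) - z * cH)) * (θ2 * z)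
        < θ0 * (z * cH) := by
      calc (θ0 * (Q1 z + Q1 (1-z)) - 7/10 * (θ0 * (Q1 z + Q1 (1-z)) - z * cH)) * (θ2 * z)
          < ((θ0/θ2) * cH) * (θ2 * z) :=
            mul_lt_mul_of_pos_right g2a (mul_pos hθ2 hz0')
        _ = θ0 * (z * cH) := g2b
    have h2n : t * z * (3/10 + 7/10 * p) < p := by
      have g := E2
      rw [hθ2e, hye] at g
      refine cancel_pos (show (0:ℝ) < θ0 * θ0 * (Q1 z + Q1 (1-z)) by positivity) ?_
      linarith only [g]
    have g3a : θ2 * (Q1 z + Q1 (1-z)) < 4 * (7/10 * (θ0 * (Q1 z + Q1 (1-z)) - z * cH)) := by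
      linarith only [G3, mul_le_mul_of_nonneg_left hq2m hθ2.le]
    have h3n : t < 14/5 * (1-p) := by
      have g := g3a
      rw [hθ2e, hye] at g
      refine cancel_pos hpq ?_
      linarith only [g]
    have G4F : 1/2 * θ2 * ((Q1 z + Q1 (1-z) - Q1 1) + (1-2*z) * ((Q1 z + Q1 (1-z))/2)) - z * cH
        < 7/10 * (θ0 * (Q1 z + Q1 (1-z)) - z * cH) := by
      nlinarith only [G4, mul_nonneg hθ2.le (sub_nonneg.2 hBU),
        mul_nonneg hθ2.le (sub_nonneg.2 hHm),
        mul_nonneg (mul_nonneg hθ2.le (by linarith only [hz2] : (0:ℝ) ≤ 1-2*z))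
          (by linarith only [hq2m] : (0:ℝ) ≤ Q1 (1/2) - (Q1 z + Q1 (1-z))/2)]
    have h4n : (t/2) * ((1-μ) + (1-2*z) * (1/2)) - p < 7/10 * (1-p) := by
      have g := G4F
      rw [hθ2e, hUe, hye] at g
      refine cancel_pos hpq ?_
      linarith only [g]
    have step31 : (t/2) * ((3/10 + 7/10*p) + (1-2*z) * (1/2)) - p < 7/10 * (1-p) := by
      nlinarith only [h4n,
        mul_pos ht0 (show (0:ℝ) < (1-μ) - (3/10 + 7/10*p) by linarith only [h1n])]
    have h31 : t * (3/10 + 7/10*p)^2 + (t/2) * (3/10 + 7/10*p) - p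
        < 2 * (3/10 + 7/10*p) * (7/10 * (1-p) + p) := by
      nlinarith only [mul_lt_mul_of_pos_right step31
        (by linarith only [hs0] : (0:ℝ) < 2*(3/10 + 7/10*p)), h2n, hs0]
    -- G5 normalization
    have g5y := mul_lt_mul_of_pos_right G5 hy0
    have hly : lam * (z * cH) = θ1 * Q1 1 := by
      rw [hlam_def]; field_simp
    have e5 : (θ0 * (lam * (Q1 z + Q1 (1-z)) + (1-lam) * Q1 1) - θ1 * Q1 1) * (z * cH)
        = θ0 * (θ1 * Q1 1 * (Q1 z + Q1 (1-z)) + ((z * cH) - θ1 * Q1 1) * Q1 1)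
          - θ1 * Q1 1 * (z * cH) := by
      linear_combination (θ0 * (Q1 z + Q1 (1-z)) - θ0 * Q1 1) * hly
    rw [e5] at g5y
    rw [hθ1e, hUe, hye] at g5y
    have h5n : μ*p + r*μ*(1-μ) - r*μ*p < 7/10 * (1-p) * p := by
      refine cancel_pos (show (0:ℝ) < θ0 * θ0 * ((Q1 z + Q1 (1-z)) * (Q1 z + Q1 (1-z)))
        by positivity) ?_
      linarith only [g5y]
    have KEY5 : μ * (p*(1-r) + r*(1/2 - 7/10*(1-p))) < (7/10*(1-p)) * (p - r/2) := by
      nlinarith only [h5n, mul_nonneg (mul_nonneg hr0.le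
        (by linarith only [hmu2] : (0:ℝ) ≤ μ - 1/2))
        (by linarith only [h1n] : (0:ℝ) ≤ 7/10*(1-p) - μ)]
    have hcpos : 0 < p*(1-r) + r*(1/2 - 7/10*(1-p)) := by
      by_contra hcc
      push_neg at hcc
      nlinarith only [KEY5, mul_nonneg (by linarith only [h1n] : (0:ℝ) ≤ 7/10*(1-p) - μ)
        (by linarith only [hcc] : (0:ℝ) ≤ -(p*(1-r) + r*(1/2 - 7/10*(1-p)))),
        mul_nonneg hr0.le (sq_nonneg (1-p)), hr0, hp1]
    -- branch split
    rcases le_or_gt z (1/4) with hz4 | hz4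
    · -- x ≤ 1/4 : monotonicity gives Q1 z ≤ Q1 (1/2 - z)
      have hAH : Q1 z ≤ Q1 (1/2 - z) := hmono memz memhz (by linarith only [hz4])
      have G4C'' : θ2 * ((Q1 z + Q1 (1-z)) - Q1 1) - z * cH
          < 7/10 * (θ0 * (Q1 z + Q1 (1-z)) - z * cH) := by
        nlinarith only [G4, mul_nonneg hθ2.le (sub_nonneg.2 hAH),
          mul_nonneg hθ2.le (sub_nonneg.2 hBU)]
      have h4C : t * (1-μ) - p < 7/10 * (1-p) := by
        have g := G4C''
        rw [hθ2e, hUe, hye] at g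
        refine cancel_pos hpq ?_
        linarith only [g]
      have hstar : (t - 7/10*(1-p) - p) * (p*(1-r) + r*(1/2 - 7/10*(1-p)))
          < t * (7/10*(1-p)) * (p - r/2) := by
        nlinarith only [mul_lt_mul_of_pos_right
          (show t - 7/10*(1-p) - p < t*μ by nlinarith only [h4C]) hcpos,
          mul_lt_mul_of_pos_left KEY5 ht0]
      exact poa_branch1 r p t hrt hr0 hrp hp1 h31 h3n hstar
    · -- x > 1/4 : chord through 0 relates Q1 (1/2−z) and Q1 z
      have hαz0 : (0:ℝ) ≤ (1/2 - z)/z := div_nonneg (by linarith only [hz2]) hz0'.le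
      have hαz1 : (1/2 - z)/z ≤ 1 := by
        rw [div_le_one hz0']; linarith only [hz4]
      have hHA2 : (1/2 - z) * Q1 z ≤ z * Q1 (1/2 - z) := by
        have h := conc_aux hconc memz mem0 hαz0 hαz1
        rw [h0, show ((1/2 - z)/z)*z + (1-(1/2 - z)/z)*0 = 1/2 - z by field_simp; ring] at h
        have h3 : ((1/2-z)/z) * Q1 z ≤ Q1 (1/2 - z) := by linarith only [h]
        calc (1/2-z) * Q1 z = z * (((1/2-z)/z) * Q1 z) := by field_simp
          _ ≤ z * Q1 (1/2-z) := mul_le_mul_of_nonneg_left h3 hz0'.le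
      have G4C : θ2/4 * ((Q1 z + Q1 (1-z)) - Q1 1) - z * (z * cH)
          < 7/10 * (θ0 * (Q1 z + Q1 (1-z)) - z * cH) * z := by
        have g := mul_lt_mul_of_pos_right G4 hz0'
        nlinarith only [g, mul_nonneg hθ2.le
          (by linarith only [hHA2] : (0:ℝ) ≤ z * Q1 (1/2-z) - (1/2-z) * Q1 z),
          mul_nonneg hθ2.le (sub_nonneg.2 hBU)]
      have h4Cn : (t/4) * (1-μ) - z*p < 7/10 * (1-p) * z := by
        have g := G4C
        rw [hθ2e, hUe, hye] at g
        refine cancel_pos hpq ?_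
        linarith only [g]
      have h4Cn' : (t/4) * (1-μ) < (7/10*(1-p) + p) * z := by
        nlinarith only [h4Cn]
      have hCx : (t/4) * (1-μ) < (7/10*(1-p) + p)/2 := by
        nlinarith only [h4Cn', mul_nonneg
          (by linarith only [hp0, hp1] : (0:ℝ) ≤ 7/10*(1-p) + p)
          (by linarith only [hz2] : (0:ℝ) ≤ 1/2 - z)]
      have hCX : (t^2 * (3/10 + 7/10*p)/4) * (1-μ) < (7/10*(1-p) + p) * p := by
        have hts : 0 < t * (3/10 + 7/10*p) := mul_pos ht0 hs0
        nlinarith only [mul_lt_mul_of_pos_right h4Cn' hts,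
          mul_lt_mul_of_pos_left h2n
            (by linarith only [hp0, hp1] : (0:ℝ) < 7/10*(1-p) + p)]
      exact poa_branch2 r p t μ hrt hr0 hrp hp1 hmu2 h1n hcpos KEY5 hCx hCX
  -- top-level assembly
  have hup : ∀ w ∈ {w : ℝ | ∃ x ∈ Set.Icc (0 : ℝ) 1, w = θ0 * Q x - x * cH},
      w ≤ 10/7 * M := by
    rintro w ⟨x, hx, rfl⟩
    have hQx : Q x = Q1 x + Q1 (1-x) := rfl
    rcases le_or_gt x (1/2) with hx2 | hx2
    · have := key x hx.1 hx2
      rw [hQx]; linarith only [this]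
    · have h1x0 : (0:ℝ) ≤ 1-x := by linarith [hx.2]
      have := key (1-x) h1x0 (by linarith)
      rw [show (1:ℝ)-(1-x) = x by ring] at this
      rw [hQx]
      nlinarith only [this, mul_nonneg (by linarith only [hx2] : (0:ℝ) ≤ x - (1-x)) hc.le]
  have hne : (θ0 * Q 0 - 0 * cH) ∈
      {w : ℝ | ∃ x ∈ Set.Icc (0 : ℝ) 1, w = θ0 * Q x - x * cH} := ⟨0, mem0, rfl⟩
  have hsup := csSup_le ⟨_, hne⟩ hup
  have h07 : (0.7:ℝ) = 7/10 := by norm_num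
  rw [h07]
  linarith only [hsup]
end

section
/- (Proposition 5, K-path model) Let K ≥ 2, c_H > 0, and path costs c_k = ((k−1)/(K−1))·c_H for k = 1,…,K; let Q0 ≥ 0, θ0 > 0, and let Q1 : [0,1] → ℝ be nondecreasing with Q1(0) ≥ 0. For a feasible flow (x_1,…,x_K) with x_k ≥ 0 and x_1+⋯+x_K = 1, the payoff on path k is θ0·(Q0 + Σ_j Q1(x_j)) − c_k. Then: (i) the flow with x_1 = 1 and x_k = 0 for k ≥ 2 is the unique equilibrium; (ii) its social welfare satisfies θ0·(Q0 + Q1(1)) ≥ (1/K)·(θ0·(Q0 + Σ_{k=1}^K Q1(x_k)) − Σ_{k=1}^K c_k·x_k) for every feasible flow, i.e., the price of anarchy of the K-path content routing game without incentive design is at least 1/K. -/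
/-- Proposition 5, K-path model: With `K ≥ 2` parallel paths of
costs `c_k = ((k−1)/(K−1))·c_H` (0-indexed here: `c i = (i/(K−1))·c_H`),
common-link content `Q0 ≥ 0`, valuation `θ0 > 0` and nondecreasing `Q1` with
`Q1(0) ≥ 0`: (i) the flow putting all mass on the free path is the unique
equilibrium; (ii) its welfare `θ0·(Q0 + Q1(1))` is at least `1/K` times the
welfare of any feasible flow, i.e. the PoA without incentives is ≥ `1/K`. -/
theorem stmt_14 (K : ℕ) (hK : 2 ≤ K) (cH Q0 θ0 : ℝ) (hc : 0 < cH)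
    (hQ0 : 0 ≤ Q0) (hθ : 0 < θ0) (Q1 : ℝ → ℝ)
    (hmono : MonotoneOn Q1 (Set.Icc 0 1)) (h0 : 0 ≤ Q1 0) :
    let c : Fin K → ℝ := fun k => ((k : ℕ) : ℝ) / ((K : ℝ) - 1) * cH
    let payoff : (Fin K → ℝ) → Fin K → ℝ :=
      fun x k => θ0 * (Q0 + ∑ j, Q1 (x j)) - c k
    let feasible : (Fin K → ℝ) → Prop := fun x => (∀ k, 0 ≤ x k) ∧ ∑ k, x k = 1
    let eqm : (Fin K → ℝ) → Prop := fun x => feasible x ∧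
      ∀ i j, 0 < x i → payoff x j ≤ payoff x i
    let i0 : Fin K := ⟨0, by omega⟩
    let x0 : Fin K → ℝ := fun k => if k = i0 then 1 else 0
    eqm x0 ∧ (∀ x, eqm x → x = x0) ∧
    (∀ x, feasible x →
      (1 / (K : ℝ)) * (θ0 * (Q0 + ∑ k, Q1 (x k)) - ∑ k, c k * x k) ≤
        θ0 * (Q0 + Q1 1)) := by
  intro c payoff feasible eqm i0 x0
  have hK1 : (1:ℝ) ≤ (K : ℝ) - 1 := by
    have : (2:ℝ) ≤ (K : ℝ) := by exact_mod_cast hK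
    linarith
  have hcnn : ∀ k : Fin K, 0 ≤ c k := fun k =>
    mul_nonneg (div_nonneg (Nat.cast_nonneg _) (by linarith)) hc.le
  have hci0 : c i0 = 0 := by simp [c, i0]
  refine ⟨⟨⟨?_, ?_⟩, ?_⟩, ?_, ?_⟩
  · intro k; simp only [x0]; split <;> norm_num
  · simp [x0]
  · intro i j hi
    have hii : i = i0 := by
      by_contra h
      simp [x0, h] at hi
    subst hii
    simp only [payoff, hci0, sub_zero]
    linarith [hcnn j]
  · -- uniqueness
    intro x hx
    obtain ⟨⟨hnn, hsum⟩, heq⟩ := hx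
    have hzero : ∀ i : Fin K, i ≠ i0 → x i = 0 := by
      intro i hi
      by_contra h
      have hpos : 0 < x i := lt_of_le_of_ne (hnn i) (Ne.symm h)
      have := heq i i0 hpos
      simp only [payoff] at this
      have hci : 0 < c i := by
        have hv : 0 < (i : ℕ) := by
          rcases Nat.eq_zero_or_pos (i : ℕ) with h0' | h0'
          · exact absurd (Fin.ext h0' : i = i0) hi
          · exact h0'
        have : (0:ℝ) < ((i : ℕ) : ℝ) := by exact_mod_cast hv
        positivity
      rw [hci0] at this
      linarith
    funext k
    by_cases hk : k = i0
    · have : ∑ j, x j = x i0 := by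
        apply Finset.sum_eq_single
        · intro b _ hb; exact hzero b hb
        · intro hb; exact absurd (Finset.mem_univ i0) hb
      simp only [x0, if_pos hk, hk]
      rw [this] at hsum; exact hsum
    · simp only [x0, if_neg hk]
      exact hzero k hk
  · -- welfare bound
    intro x hx
    obtain ⟨hnn, hsum⟩ := hx
    have hx1 : ∀ k, x k ≤ 1 := by
      intro k
      calc x k ≤ ∑ j, x j := Finset.single_le_sum (fun i _ => hnn i) (Finset.mem_univ k)
        _ = 1 := hsum
    have hQ : ∀ k, Q1 (x k) ≤ Q1 1 :=
      fun k => hmono ⟨hnn k, hx1 k⟩ ⟨zero_le_one, le_refl 1⟩ (hx1 k)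
    have hsumQ : ∑ k, Q1 (x k) ≤ (K : ℝ) * Q1 1 := by
      calc ∑ k, Q1 (x k) ≤ ∑ _k : Fin K, Q1 1 :=
            Finset.sum_le_sum (fun k _ => hQ k)
        _ = (K : ℝ) * Q1 1 := by simp [mul_comm]
    have hcx : 0 ≤ ∑ k, c k * x k :=
      Finset.sum_nonneg (fun k _ => mul_nonneg (hcnn k) (hnn k))
    have hKpos : (0:ℝ) < (K : ℝ) := by linarith
    rw [one_div, inv_mul_le_iff₀ hKpos]
    have h1 : θ0 * (∑ k, Q1 (x k)) ≤ θ0 * ((K : ℝ) * Q1 1) :=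
      mul_le_mul_of_nonneg_left hsumQ hθ.le
    nlinarith [mul_nonneg hθ.le hQ0, mul_pos hθ hKpos]
end

section
/- (Dynamic model, stationary social optimum) Let N > 0, γ ∈ (0,1), r ∈ (0,1), and define f(x) = (1−γ)·N·ln r·( r^{1−x}/(1 − γ·r^{1−x}) − r^x/(1 − γ·r^x) ) for x ∈ [0,1]. Then f is strictly decreasing on [0,1], f(1/2) = 0, and f(0) = (r−1)·N·ln r/(1−γr) > 0. Consequently, for c_H > 0: if (r−1)·N·ln r/(1−γr) ≤ 4·c_H, then f(x) < 4·c_H for all x ∈ (0,1/2], so the stationary optimal flow on the high-cost path is x* = 0; otherwise the equation f(x) = 4·c_H has a unique solution x* ∈ (0,1/2). -/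
/-- Dynamic model, stationary social optimum: For `N > 0`,
`γ, r ∈ (0,1)` and
`f(x) = (1−γ)·N·ln r·(r^(1−x)/(1−γr^(1−x)) − r^x/(1−γr^x))`:
`f` is strictly decreasing on `[0,1]`, `f(1/2) = 0`,
`f(0) = (r−1)·N·ln r/(1−γr) > 0`; consequently for `c_H > 0`, if
`f(0) ≤ 4c_H` then `f(x) < 4c_H` on `(0,1/2]` (so the stationary optimal flow
is `x* = 0`), and otherwise `f(x) = 4c_H` has a unique solution in
`(0,1/2)`. -/
theorem stmt_17 (N γ r : ℝ) (hN : 0 < N) (hγ : γ ∈ Set.Ioo (0 : ℝ) 1)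
    (hr : r ∈ Set.Ioo (0 : ℝ) 1) :
    let f : ℝ → ℝ := fun x =>
      (1 - γ) * N * Real.log r *
        (r ^ (1 - x) / (1 - γ * r ^ (1 - x)) - r ^ x / (1 - γ * r ^ x))
    StrictAntiOn f (Set.Icc 0 1) ∧
    f (1 / 2) = 0 ∧
    (f 0 = (r - 1) * N * Real.log r / (1 - γ * r) ∧ 0 < f 0) ∧
    ∀ cH : ℝ, 0 < cH →
      ((r - 1) * N * Real.log r / (1 - γ * r) ≤ 4 * cH →
        ∀ x ∈ Set.Ioc (0 : ℝ) (1 / 2), f x < 4 * cH) ∧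
      (4 * cH < (r - 1) * N * Real.log r / (1 - γ * r) →
        ∃! x, x ∈ Set.Ioo (0 : ℝ) (1 / 2) ∧ f x = 4 * cH) := by
  obtain ⟨hγ0, hγ1⟩ := hγ
  obtain ⟨hr0, hr1⟩ := hr
  intro f
  have hlog : Real.log r < 0 := Real.log_neg hr0 hr1
  have hrp : ∀ t : ℝ, 0 < r ^ t := fun t => Real.rpow_pos_of_pos hr0 t
  have hden : ∀ t : ℝ, 0 ≤ t → 0 < 1 - γ * r ^ t := by
    intro t ht
    have h1 : r ^ t ≤ 1 := Real.rpow_le_one hr0.le hr1.le ht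
    nlinarith [hrp t]
  have hmono : ∀ u v : ℝ, 0 < u → u < v → γ * v < 1 →
      u / (1 - γ * u) < v / (1 - γ * v) := by
    intro u v hu huv hv
    have h1 : 0 < 1 - γ * u := by nlinarith
    have h2 : 0 < 1 - γ * v := by nlinarith
    rw [div_lt_div_iff₀ h1 h2]; nlinarith
  have ganti : ∀ s t : ℝ, 0 ≤ s → s < t →
      r ^ t / (1 - γ * r ^ t) < r ^ s / (1 - γ * r ^ s) := by
    intro s t hs hst
    have h1 : r ^ t < r ^ s := Real.rpow_lt_rpow_of_exponent_gt hr0 hr1 hst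
    have h2 : γ * r ^ s < 1 := by
      have := Real.rpow_le_one hr0.le hr1.le hs
      nlinarith
    exact hmono _ _ (hrp t) h1 h2
  have hC : (1 - γ) * N * Real.log r < 0 :=
    mul_neg_of_pos_of_neg (mul_pos (by linarith) hN) hlog
  have hSA : StrictAntiOn f (Set.Icc 0 1) := by
    intro x hx y hy hxy
    have h1 : r ^ y / (1 - γ * r ^ y) < r ^ x / (1 - γ * r ^ x) :=
      ganti x y hx.1 hxy
    have h2 : r ^ (1 - x) / (1 - γ * r ^ (1 - x)) <
        r ^ (1 - y) / (1 - γ * r ^ (1 - y)) :=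
      ganti (1 - y) (1 - x) (by linarith [hy.2]) (by linarith)
    show (1 - γ) * N * Real.log r *
        (r ^ (1 - y) / (1 - γ * r ^ (1 - y)) - r ^ y / (1 - γ * r ^ y)) <
      (1 - γ) * N * Real.log r *
        (r ^ (1 - x) / (1 - γ * r ^ (1 - x)) - r ^ x / (1 - γ * r ^ x))
    nlinarith
  have hf12 : f (1 / 2) = 0 := by
    show (1 - γ) * N * Real.log r *
        (r ^ (1 - 1 / 2 : ℝ) / (1 - γ * r ^ (1 - 1 / 2 : ℝ)) -
          r ^ (1 / 2 : ℝ) / (1 - γ * r ^ (1 / 2 : ℝ))) = 0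
    norm_num
  have hf0 : f 0 = (r - 1) * N * Real.log r / (1 - γ * r) := by
    show (1 - γ) * N * Real.log r *
        (r ^ (1 - 0 : ℝ) / (1 - γ * r ^ (1 - 0 : ℝ)) -
          r ^ (0 : ℝ) / (1 - γ * r ^ (0 : ℝ))) = _
    rw [show (1 - 0 : ℝ) = 1 by norm_num, Real.rpow_one, Real.rpow_zero]
    have h1 : 1 - γ * r ≠ 0 := by nlinarith
    have h2 : (1 : ℝ) - γ ≠ 0 := by intro h; linarith [h]
    rw [mul_one]
    field_simp
    ring
  have hf0pos : 0 < f 0 := by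
    rw [hf0]
    apply div_pos (by nlinarith) (by nlinarith)
  refine ⟨hSA, hf12, ⟨hf0, hf0pos⟩, ?_⟩
  intro cH hcH
  constructor
  · intro hle x hx
    have hxmem : x ∈ Set.Icc (0 : ℝ) 1 := ⟨hx.1.le, by linarith [hx.2]⟩
    have h0mem : (0 : ℝ) ∈ Set.Icc (0 : ℝ) 1 := by norm_num
    have := hSA h0mem hxmem hx.1
    rw [hf0] at this
    linarith
  · intro hlt
    -- continuity
    have hcrow : Continuous fun x : ℝ => r ^ x := by
      rw [show (fun x : ℝ => r ^ x) = fun x => Real.exp (Real.log r * x) from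
        funext fun x => Real.rpow_def_of_pos hr0 x]
      exact Real.continuous_exp.comp (continuous_const.mul continuous_id)
    have hcont : ContinuousOn f (Set.Icc 0 (1 / 2)) := by
      apply ContinuousOn.mul continuousOn_const
      apply ContinuousOn.sub
      · apply ContinuousOn.div
        · exact (hcrow.comp (continuous_const.sub continuous_id)).continuousOn
        · exact (continuous_const.sub (continuous_const.mul
            (hcrow.comp (continuous_const.sub continuous_id)))).continuousOn
        · intro x hx
          exact (hden (1 - x) (by linarith [hx.2])).ne'
      · apply ContinuousOn.div
        · exact hcrow.continuousOn
        · exact (continuous_const.sub (continuous_const.mul hcrow)).continuousOn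
        · intro x hx
          exact (hden x hx.1).ne'
    have hmem : (4 * cH) ∈ Set.Ioo (f (1 / 2)) (f 0) := by
      rw [hf12, hf0]; exact ⟨by linarith, hlt⟩
    obtain ⟨x, hx, hfx⟩ :=
      intermediate_value_Ioo' (by norm_num : (0 : ℝ) ≤ 1 / 2) hcont hmem
    have hsub : Set.Ioo (0 : ℝ) (1 / 2) ⊆ Set.Icc (0 : ℝ) 1 := fun z hz =>
      ⟨hz.1.le, by linarith [hz.2]⟩
    refine ⟨x, ⟨hx, hfx⟩, ?_⟩
    intro y hy
    exact hSA.injOn (hsub hy.1) (hsub hx) (hy.2.trans hfx.symm)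
end

section
/- (Dynamic model, content-restriction threshold) Let N > 0, γ ∈ (0,1), r ∈ (0,1). Then N(1−√r)/(2(1−γ√r)) − N(1−r)/(4(1−γr)) = N·(1+γ√r)·(1−√r)² / (4·(1−γ√r)·(1−γr)). Consequently, for c_H > 0, the stationary perfect-path-diversity welfare N(1−√r)/(2(1−γ√r)) − c_H strictly exceeds the stationary no-incentive welfare N(1−r)/(4(1−γr)) if and only if c_H < N·(1+γ√r)·(1−√r)² / (4·(1−γ√r)·(1−γr)). -/
/-- Dynamic model, content-restriction threshold: For `N > 0`
and `γ, r ∈ (0,1)`,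
`N(1−√r)/(2(1−γ√r)) − N(1−r)/(4(1−γr)) = N(1+γ√r)(1−√r)²/(4(1−γ√r)(1−γr))`;
consequently, for `c_H > 0`, the stationary perfect-path-diversity welfare
`N(1−√r)/(2(1−γ√r)) − c_H` strictly exceeds the stationary no-incentive
welfare `N(1−r)/(4(1−γr))` iff
`c_H < N(1+γ√r)(1−√r)²/(4(1−γ√r)(1−γr))`. -/
theorem stmt_18 (N γ r : ℝ) (hN : 0 < N) (hγ : γ ∈ Set.Ioo (0 : ℝ) 1)
    (hr : r ∈ Set.Ioo (0 : ℝ) 1) :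
    (N * (1 - Real.sqrt r) / (2 * (1 - γ * Real.sqrt r)) -
        N * (1 - r) / (4 * (1 - γ * r)) =
      N * (1 + γ * Real.sqrt r) * (1 - Real.sqrt r) ^ 2 /
        (4 * (1 - γ * Real.sqrt r) * (1 - γ * r))) ∧
    ∀ cH : ℝ, 0 < cH →
      (N * (1 - r) / (4 * (1 - γ * r)) <
          N * (1 - Real.sqrt r) / (2 * (1 - γ * Real.sqrt r)) - cH ↔
        cH < N * (1 + γ * Real.sqrt r) * (1 - Real.sqrt r) ^ 2 /
          (4 * (1 - γ * Real.sqrt r) * (1 - γ * r))) := by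
  obtain ⟨hγ0, hγ1⟩ := hγ
  obtain ⟨hr0, hr1⟩ := hr
  set s := Real.sqrt r with hs
  have hs0 : 0 < s := Real.sqrt_pos.mpr hr0
  have hsr : s ^ 2 = r := Real.sq_sqrt hr0.le
  have hs1 : s < 1 := by nlinarith
  have hd1 : 0 < 1 - γ * s := by nlinarith
  have hd2 : 0 < 1 - γ * r := by nlinarith
  have key : N * (1 - s) / (2 * (1 - γ * s)) - N * (1 - r) / (4 * (1 - γ * r)) =
      N * (1 + γ * s) * (1 - s) ^ 2 / (4 * (1 - γ * s) * (1 - γ * r)) := by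
    rw [div_sub_div _ _ (mul_pos two_pos hd1).ne' (mul_pos four_pos hd2).ne', div_eq_div_iff (mul_pos (mul_pos two_pos hd1) (mul_pos four_pos hd2)).ne' (mul_pos (mul_pos four_pos hd1) hd2).ne']
    rw [← hsr]; ring
  refine ⟨key, fun cH _ => ?_⟩
  constructor <;> intro h <;> linarith [key]
end

section
/- (Appendix A, unique critical cost difference) Let b_H > 0, b_L > 0, θ0 > 0, and let Q1 : [0,1] → ℝ be differentiable with strictly decreasing derivative Q1′ (strict concavity). Define F(Δ) = θ0·Q1′((b_L−Δ)/(b_H+b_L)) − θ0·Q1′((b_H+Δ)/(b_H+b_L)) + Δ for Δ ∈ [−b_H, b_L]. Then F is strictly increasing on [−b_H, b_L], F(−b_H) = θ0·(Q1′(1) − Q1′(0)) − b_H < 0, and F(b_L) = θ0·(Q1′(0) − Q1′(1)) + b_L > 0; hence F has a unique zero Δã ∈ (−b_H, b_L). Moreover Δã > 0 if b_L > b_H, Δã = 0 if b_L = b_H, and Δã < 0 if b_L < b_H. -/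
/-- Appendix A, unique critical cost difference: Let
`b_H, b_L > 0`, `θ0 > 0`, let `Q1` be differentiable on `[0,1]` with strictly
decreasing derivative `Q1'`, and let
`F(Δ) = θ0·Q1'((b_L−Δ)/(b_H+b_L)) − θ0·Q1'((b_H+Δ)/(b_H+b_L)) + Δ`.
Then `F` is strictly increasing on `[−b_H, b_L]`,
`F(−b_H) = θ0·(Q1'(1) − Q1'(0)) − b_H < 0`,
`F(b_L) = θ0·(Q1'(0) − Q1'(1)) + b_L > 0`, `F` has a unique zero
`Δã ∈ (−b_H, b_L)`, and `Δã > 0` if `b_L > b_H`, `Δã = 0` if `b_L = b_H`,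
`Δã < 0` if `b_L < b_H`. -/
theorem stmt_19 (bH bL θ0 : ℝ) (hbH : 0 < bH) (hbL : 0 < bL) (hθ : 0 < θ0)
    (Q1 Q1' : ℝ → ℝ) (hderiv : ∀ x ∈ Set.Icc (0 : ℝ) 1, HasDerivAt Q1 (Q1' x) x)
    (hanti : StrictAntiOn Q1' (Set.Icc 0 1)) :
    let F : ℝ → ℝ := fun Δ =>
      θ0 * Q1' ((bL - Δ) / (bH + bL)) - θ0 * Q1' ((bH + Δ) / (bH + bL)) + Δ
    StrictMonoOn F (Set.Icc (-bH) bL) ∧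
    (F (-bH) = θ0 * (Q1' 1 - Q1' 0) - bH ∧ F (-bH) < 0) ∧
    (F bL = θ0 * (Q1' 0 - Q1' 1) + bL ∧ 0 < F bL) ∧
    (∃! Δ, Δ ∈ Set.Ioo (-bH) bL ∧ F Δ = 0) ∧
    (∀ Δ ∈ Set.Ioo (-bH) bL, F Δ = 0 →
      (bH < bL → 0 < Δ) ∧ (bL = bH → Δ = 0) ∧ (bL < bH → Δ < 0)) := by
  intro F
  set s : ℝ := bH + bL with hs
  have hspos : 0 < s := by positivity
  have hsne : s ≠ 0 := ne_of_gt hspos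
  -- membership lemmas
  have hmem1 : ∀ Δ ∈ Set.Icc (-bH) bL, (bL - Δ) / s ∈ Set.Icc (0:ℝ) 1 := by
    intro Δ hΔ
    constructor
    · apply div_nonneg (by linarith [hΔ.2]) hspos.le
    · rw [div_le_one hspos]; linarith [hΔ.1]
  have hmem2 : ∀ Δ ∈ Set.Icc (-bH) bL, (bH + Δ) / s ∈ Set.Icc (0:ℝ) 1 := by
    intro Δ hΔ
    constructor
    · apply div_nonneg (by linarith [hΔ.1]) hspos.le
    · rw [div_le_one hspos]; linarith [hΔ.2]
  -- strict monotonicity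
  have hmono : StrictMonoOn F (Set.Icc (-bH) bL) := by
    intro x hx y hy hxy
    have h1 : Q1' ((bL - x) / s) < Q1' ((bL - y) / s) := by
      apply hanti (hmem1 y hy) (hmem1 x hx)
      gcongr
    have h2 : Q1' ((bH + y) / s) < Q1' ((bH + x) / s) := by
      apply hanti (hmem2 x hx) (hmem2 y hy)
      gcongr
    have h1' := mul_lt_mul_of_pos_left h1 hθ
    have h2' := mul_lt_mul_of_pos_left h2 hθ
    simp only [F]
    linarith
  have hQ10 : Q1' 1 < Q1' 0 :=
    hanti (by constructor <;> norm_num) (by constructor <;> norm_num) one_pos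
  -- endpoint values
  have e1 : (bL - -bH) / s = 1 := by field_simp [hs]; ring
  have e2 : (bH + -bH) / s = 0 := by simp
  have e3 : (bL - bL) / s = 0 := by simp
  have e4 : (bH + bL) / s = 1 := by field_simp [hs]; exact hs.symm
  have hFa : F (-bH) = θ0 * (Q1' 1 - Q1' 0) - bH := by
    simp only [F, ← hs, e1, e2]; ring
  have hFaneg : F (-bH) < 0 := by
    rw [hFa]; nlinarith
  have hFb : F bL = θ0 * (Q1' 0 - Q1' 1) + bL := by
    simp only [F, ← hs, e3, e4, div_self hsne]; ring
  have hFbpos : 0 < F bL := by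
    rw [hFb]; nlinarith
  have hab : (-bH : ℝ) ≤ bL := by linarith
  -- F is the derivative of G on the interval
  set G : ℝ → ℝ := fun Δ =>
    -(s * θ0) * Q1 ((bL - Δ) / s) - (s * θ0) * Q1 ((bH + Δ) / s) + Δ ^ 2 / 2 with hG
  have hGderiv : ∀ x ∈ Set.Icc (-bH) bL,
      HasDerivWithinAt G (F x) (Set.Icc (-bH) bL) x := by
    intro x hx
    have haff1 : HasDerivAt (fun Δ : ℝ => (bL - Δ) / s) (-1 / s) x :=
      ((hasDerivAt_id x).const_sub bL).div_const s
    have haff2 : HasDerivAt (fun Δ : ℝ => (bH + Δ) / s) (1 / s) x := by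
      simpa using ((hasDerivAt_id x).const_add bH).div_const s
    have h1 : HasDerivAt (fun Δ : ℝ => Q1 ((bL - Δ) / s))
        (Q1' ((bL - x) / s) * (-1 / s)) x :=
      (hderiv _ (hmem1 x hx)).comp x haff1
    have h2 : HasDerivAt (fun Δ : ℝ => Q1 ((bH + Δ) / s))
        (Q1' ((bH + x) / s) * (1 / s)) x :=
      (hderiv _ (hmem2 x hx)).comp x haff2
    have h3 : HasDerivAt (fun Δ : ℝ => Δ ^ 2 / 2) x x := by
      simpa using ((hasDerivAt_pow 2 x).div_const 2)
    have : HasDerivAt G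
        (-(s * θ0) * (Q1' ((bL - x) / s) * (-1 / s))
          - (s * θ0) * (Q1' ((bH + x) / s) * (1 / s)) + x) x :=
      ((h1.const_mul (-(s * θ0))).sub (h2.const_mul (s * θ0))).add h3
    have heq : -(s * θ0) * (Q1' ((bL - x) / s) * (-1 / s))
          - (s * θ0) * (Q1' ((bH + x) / s) * (1 / s)) + x = F x := by
      field_simp [F]; ring
    exact (heq ▸ this).hasDerivWithinAt
  -- existence of a zero via Darboux
  obtain ⟨c, hc, hFc⟩ := exists_hasDerivWithinAt_eq_of_ge_of_le hab hGderiv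
    (m := 0) hFaneg.le hFbpos.le
  have hcIoo : c ∈ Set.Ioo (-bH) bL := by
    constructor
    · rcases eq_or_lt_of_le hc.1 with h | h
      · exfalso; rw [← h] at hFc; linarith
      · exact h
    · rcases eq_or_lt_of_le hc.2 with h | h
      · exfalso; rw [h] at hFc; linarith
      · exact h
  have hzero : c ∈ Set.Ioo (-bH) bL ∧ F c = 0 := ⟨hcIoo, hFc⟩
  have hinj := hmono.injOn
  have huniq : ∃! Δ, Δ ∈ Set.Ioo (-bH) bL ∧ F Δ = 0 := by
    refine ⟨c, hzero, ?_⟩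
    intro y hy
    exact hinj (Set.Ioo_subset_Icc_self hy.1) (Set.Ioo_subset_Icc_self hcIoo)
      (by rw [hy.2, hFc])
  refine ⟨hmono, ⟨hFa, hFaneg⟩, ⟨hFb, hFbpos⟩, huniq, ?_⟩
  -- sign of the zero
  intro Δ hΔ hFΔ
  have h0mem : (0:ℝ) ∈ Set.Icc (-bH) bL := ⟨by linarith, hbL.le⟩
  have hF0 : F 0 = θ0 * Q1' (bL / s) - θ0 * Q1' (bH / s) := by
    simp only [F, ← hs]; ring_nf
  refine ⟨?_, ?_, ?_⟩
  · intro hlt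
    by_contra h
    push_neg at h
    have m1 : bL / s ∈ Set.Icc (0:ℝ) 1 := by simpa using hmem1 0 h0mem
    have m2 : bH / s ∈ Set.Icc (0:ℝ) 1 := by simpa using hmem2 0 h0mem
    have hq : Q1' (bL / s) < Q1' (bH / s) := hanti m2 m1 (by gcongr)
    have hF0neg : F 0 < 0 := by rw [hF0]; nlinarith
    have : F Δ ≤ F 0 := hmono.monotoneOn (Set.Ioo_subset_Icc_self hΔ) h0mem h
    linarith
  · intro heq
    have hF0' : F 0 = 0 := by rw [hF0, heq]; ring
    exact hinj (Set.Ioo_subset_Icc_self hΔ) h0mem (by rw [hFΔ, hF0'])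
  · intro hlt
    by_contra h
    push_neg at h
    have m1 : bL / s ∈ Set.Icc (0:ℝ) 1 := by simpa using hmem1 0 h0mem
    have m2 : bH / s ∈ Set.Icc (0:ℝ) 1 := by simpa using hmem2 0 h0mem
    have hq : Q1' (bH / s) < Q1' (bL / s) := hanti m1 m2 (by gcongr)
    have hF0pos : 0 < F 0 := by rw [hF0]; nlinarith
    have : F 0 ≤ F Δ := hmono.monotoneOn h0mem (Set.Ioo_subset_Icc_self hΔ) h
    linarith
end
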